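/- arXiv:2402.08438 — 11 statements merged into one kernel-verified Lean document; each statement's English description precedes it below -/
import Mathlib

section
/- For all positive integers m, n, l and all third-order real tensors A, B : Fin l → Matrix (Fin m) (Fin n) ℝ, the Frobenius inner product of their block circulant matrices equals l times the entrywise inner product of the tensors: trace((bcirc A)ᵀ · bcirc B) = l · Σ_{k ∈ Fin l} trace((A⁽ᵏ⁾)ᵀ · B⁽ᵏ⁾). -/
open Matrix

/-- The block circulant matrix of a third-order tensor given by its frontal slices. -/
def bcirc {m n l : ℕ} (A : Fin l → Matrix (Fin m) (Fin n) ℝ) :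
    Matrix (Fin l × Fin m) (Fin l × Fin n) ℝ :=
  Matrix.of fun p q => A (p.1 - q.1) p.2 q.2

/-- For all positive integers `m, n, l` and third-order tensors `A, B`,
the Frobenius inner product of their block circulant matrices equals `l` times the
entrywise inner product of the tensors. -/
theorem bcirc_frobenius_inner_eq_card_mul_tensor_inner
    (m n l : ℕ) (hm : 0 < m) (hn : 0 < n) (hl : 0 < l)
    (A B : Fin l → Matrix (Fin m) (Fin n) ℝ) :
    Matrix.trace ((bcirc A)ᵀ * bcirc B) =
      (l : ℝ) * ∑ k : Fin l, Matrix.trace ((A k)ᵀ * B k) := by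
  simp only [Matrix.trace, Matrix.diag, Matrix.mul_apply, Matrix.transpose_apply, bcirc,
    Matrix.of_apply, Fintype.sum_prod_type]
  have h : ∀ q : Fin l, ∑ j : Fin n, ∑ p : Fin l, ∑ i : Fin m,
      A (p - q) i j * B (p - q) i j
      = ∑ k : Fin l, ∑ j : Fin n, ∑ i : Fin m, A k i j * B k i j := by
    intro q
    haveI : NeZero l := ⟨hl.ne'⟩
    rw [Finset.sum_comm]
    exact Fintype.sum_equiv (Equiv.subRight q)
      (fun p => ∑ j : Fin n, ∑ i : Fin m, A (p - q) i j * B (p - q) i j)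
      (fun k => ∑ j : Fin n, ∑ i : Fin m, A k i j * B k i j) fun p => rfl
  calc ∑ q : Fin l, ∑ j : Fin n, ∑ p : Fin l, ∑ i : Fin m,
        A (p - q) i j * B (p - q) i j
      = ∑ q : Fin l, ∑ k : Fin l, ∑ j : Fin n, ∑ i : Fin m,
        A k i j * B k i j := Finset.sum_congr rfl fun q _ => h q
    _ = (l : ℝ) * ∑ k : Fin l, ∑ j : Fin n, ∑ i : Fin m, A k i j * B k i j := by
        rw [Finset.sum_const, Finset.card_univ, Fintype.card_fin, nsmul_eq_mul]
end

section
/- Every third-order real tensor A : Fin l → Matrix (Fin m) (Fin n) ℝ can be block-diagonalized by the discrete Fourier transform: (F_l ⊗ I_m)^H · bcirc(A) · (F_l ⊗ I_n) is block diagonal, i.e. its ((p,i),(q,j)) entry is 0 whenever p ≠ q, and equals (D_p(A)) i j whenever p = q, where D_k(A) := Σ_{s=0}^{l−1} e^{−2πi·sk/l} · A⁽ˢ⁾ ∈ ℂ^{m×n}. Moreover D_0(A) has real entries, and D_k(A) = conj(D_{l−k}(A)) for every k ∈ Fin l (indices mod l). -/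
open Matrix

/-- The normalized `l × l` discrete Fourier transform matrix,
`(F_l)_{jk} = l^{-1/2} · exp(2πi·jk/l)`. -/
noncomputable def dftMatrix (l : ℕ) : Matrix (Fin l) (Fin l) ℂ :=
  Matrix.of fun j k =>
    ((Real.sqrt l : ℝ) : ℂ)⁻¹ *
      Complex.exp (2 * (Real.pi : ℂ) * Complex.I * ((j : ℕ) * (k : ℕ) : ℕ) / (l : ℂ))

/-- The `k`-th diagonal block `D_k(A) = Σ_{s=0}^{l-1} exp(-2πi·sk/l) · A⁽ˢ⁾`. -/
noncomputable def dftSlice {m n l : ℕ} (A : Fin l → Matrix (Fin m) (Fin n) ℝ) (k : Fin l) :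
    Matrix (Fin m) (Fin n) ℂ :=
  ∑ s : Fin l,
    Complex.exp (-(2 * (Real.pi : ℂ) * Complex.I * ((s : ℕ) * (k : ℕ) : ℕ) / (l : ℂ))) •
      (A s).map (Complex.ofReal)

/-! ### Auxiliary machinery -/

/-- `Efun l t = exp(2πi·t/l)` for `t : ℤ`. -/
noncomputable def Efun (l : ℕ) (t : ℤ) : ℂ :=
  Complex.exp (2 * (Real.pi : ℂ) * Complex.I * (t : ℂ) / (l : ℂ))

lemma Efun_add (l : ℕ) (s t : ℤ) : Efun l (s + t) = Efun l s * Efun l t := by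
  rw [Efun, Efun, Efun, ← Complex.exp_add]
  congr 1
  push_cast
  ring

lemma Efun_zero (l : ℕ) : Efun l 0 = 1 := by simp [Efun]

lemma Efun_mul_l (l : ℕ) [NeZero l] (n : ℤ) : Efun l (l * n) = 1 := by
  have hl : (l : ℂ) ≠ 0 := by exact_mod_cast (NeZero.ne l)
  have : (2 * (Real.pi : ℂ) * Complex.I * ((l * n : ℤ) : ℂ) / (l : ℂ))
      = n * (2 * Real.pi * Complex.I) := by
    field_simp
    push_cast
    ring
  rw [Efun, this, Complex.exp_int_mul_two_pi_mul_I]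

lemma Efun_congr (l : ℕ) [NeZero l] {a b : ℤ} (h : (l : ℤ) ∣ (a - b)) :
    Efun l a = Efun l b := by
  obtain ⟨k, hk⟩ := h
  have : a = b + l * k := by linarith
  rw [this, Efun_add, Efun_mul_l, mul_one]

lemma Efun_eq_one_iff (l : ℕ) [NeZero l] (t : ℤ) : Efun l t = 1 ↔ (l : ℤ) ∣ t := by
  have hl : (l : ℂ) ≠ 0 := by exact_mod_cast (NeZero.ne l)
  have hpi : (Real.pi : ℂ) ≠ 0 := by exact_mod_cast Real.pi_ne_zero
  constructor
  · intro h
    rw [Efun, Complex.exp_eq_one_iff] at h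
    obtain ⟨k, hk⟩ := h
    field_simp at hk
    have h2 : (2 : ℂ) * Real.pi * Complex.I ≠ 0 := by
      simp [hpi, Complex.I_ne_zero]
    have ht : (t : ℂ) = (k : ℂ) * l := by
      apply mul_left_cancel₀ h2
      linear_combination (2 * (Real.pi : ℂ) * Complex.I) * hk
    have ht' : t = k * l := by exact_mod_cast ht
    exact ⟨k, by linarith⟩
  · rintro ⟨k, rfl⟩
    exact Efun_mul_l l k

lemma Efun_pow (l : ℕ) (t : ℤ) (c : ℕ) : Efun l (c * t) = (Efun l t) ^ c := by
  induction c with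
  | zero => simp [Efun_zero]
  | succ c ih =>
      have h : ((c : ℤ) + 1) * t = c * t + t := by ring
      push_cast
      rw [h, Efun_add, ih, pow_succ]

lemma Efun_conj (l : ℕ) (t : ℤ) : (starRingEnd ℂ) (Efun l t) = Efun l (-t) := by
  rw [Efun, Efun, ← Complex.exp_conj]
  congr 1
  simp [map_div₀, Complex.conj_I, map_ofNat]

lemma sum_Efun_eq_zero (l : ℕ) [NeZero l] {t : ℤ} (h : ¬ (l : ℤ) ∣ t) :
    ∑ c : Fin l, Efun l (c * t) = 0 := by
  have h1 : Efun l t ≠ 1 := fun hc => h ((Efun_eq_one_iff l t).1 hc)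
  have hs : ∑ c : Fin l, Efun l (c * t) = ∑ c ∈ Finset.range l, (Efun l t) ^ c := by
    rw [← Fin.sum_univ_eq_sum_range (fun c => (Efun l t) ^ c) l]
    exact Finset.sum_congr rfl fun c _ => by exact_mod_cast Efun_pow l t c
  rw [hs, geom_sum_eq h1]
  have hl : (Efun l t) ^ l = 1 := by
    rw [← Efun_pow]
    exact (Efun_eq_one_iff l _).2 ⟨t, by ring⟩
  rw [hl, sub_self, zero_div]

lemma dftMatrix_eq (l : ℕ) (a b : Fin l) :
    dftMatrix l a b = ((Real.sqrt l : ℝ) : ℂ)⁻¹ * Efun l ((a : ℕ) * (b : ℕ)) := by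
  simp only [dftMatrix, Efun, Matrix.of_apply]
  norm_cast

lemma dftSlice_apply {m n l : ℕ} (A : Fin l → Matrix (Fin m) (Fin n) ℝ) (k : Fin l)
    (i : Fin m) (j : Fin n) :
    dftSlice A k i j = ∑ s : Fin l, Efun l (-(((s : ℕ) : ℤ) * (k : ℕ))) * (A s i j : ℂ) := by
  simp only [dftSlice, Matrix.sum_apply, Matrix.smul_apply, Matrix.map_apply, smul_eq_mul]
  refine Finset.sum_congr rfl fun s _ => ?_
  congr 1
  rw [Efun]
  congr 1
  push_cast
  ring

lemma bcirc_entry (m n l : ℕ) [NeZero l] (A : Fin l → Matrix (Fin m) (Fin n) ℝ)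
    (p q : Fin l) (i : Fin m) (j : Fin n) :
    ((Matrix.kroneckerMap (· * ·) (dftMatrix l) (1 : Matrix (Fin m) (Fin m) ℂ))ᴴ *
        (bcirc A).map (Complex.ofReal) *
        Matrix.kroneckerMap (· * ·) (dftMatrix l) (1 : Matrix (Fin n) (Fin n) ℂ))
      (p, i) (q, j)
    = if p = q then dftSlice A p i j else 0 := by
  have hl0 : (0 : ℝ) ≤ l := Nat.cast_nonneg l
  set r : ℂ := ((Real.sqrt l : ℝ) : ℂ)⁻¹ with hr
  have hrr : r * r = ((l : ℝ) : ℂ)⁻¹ := by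
    rw [hr, ← mul_inv, ← Complex.ofReal_mul, Real.mul_self_sqrt hl0]
  have hconj_r : (starRingEnd ℂ) r = r := by
    rw [hr, map_inv₀, Complex.conj_ofReal]
  -- Step 1: expand the matrix product
  have step1 :
      ((Matrix.kroneckerMap (· * ·) (dftMatrix l) (1 : Matrix (Fin m) (Fin m) ℂ))ᴴ *
          (bcirc A).map (Complex.ofReal) *
          Matrix.kroneckerMap (· * ·) (dftMatrix l) (1 : Matrix (Fin n) (Fin n) ℂ))
        (p, i) (q, j)
      = ∑ c : Fin l, ∑ a : Fin l,
          (starRingEnd ℂ) (dftMatrix l a p) * (A (a - c) i j : ℂ) * dftMatrix l c q := by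
    simp [Matrix.mul_apply, Fintype.sum_prod_type, Matrix.conjTranspose_apply,
      Matrix.kroneckerMap_apply, Matrix.one_apply, bcirc, Matrix.map_apply,
      Finset.sum_mul, mul_ite, ite_mul, mul_zero, zero_mul, mul_one, one_mul,
      apply_ite (starRingEnd ℂ), map_zero, Finset.sum_ite_eq', Finset.sum_ite_eq]
  rw [step1]
  -- Step 2: reindex inner sum a = c + s and rewrite with Efun
  have step2 : ∀ c : Fin l,
      (∑ a : Fin l, (starRingEnd ℂ) (dftMatrix l a p) * (A (a - c) i j : ℂ) * dftMatrix l c q)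
      = ∑ s : Fin l, (r * r) *
          (Efun l (((c : ℕ) : ℤ) * (((q : ℕ) : ℤ) - ((p : ℕ) : ℤ))) *
            (Efun l (-(((s : ℕ) : ℤ) * (p : ℕ))) * (A s i j : ℂ))) := by
    intro c
    rw [← Equiv.sum_comp (Equiv.addLeft c)
      (fun a => (starRingEnd ℂ) (dftMatrix l a p) * (A (a - c) i j : ℂ) * dftMatrix l c q)]
    refine Finset.sum_congr rfl fun s _ => ?_
    have hsub : (Equiv.addLeft c) s - c = s := by
      simp [Equiv.addLeft]
    have hval : (Equiv.addLeft c) s = c + s := rfl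
    rw [hsub, hval, dftMatrix_eq, dftMatrix_eq, ← hr, _root_.map_mul, hconj_r, Efun_conj]
    -- periodicity: (c+s).val ≡ c.val + s.val [mod l]
    have hmod : (((c + s : Fin l) : ℕ) : ℤ) % l = ((((c : ℕ) : ℤ)) + (((s : ℕ) : ℤ))) % l := by
      have hv : ((c + s : Fin l) : ℕ) = ((c : ℕ) + (s : ℕ)) % l := by
        simp [Fin.add_def]
      rw [hv]
      push_cast
      rw [Int.emod_emod_of_dvd _ dvd_rfl]
    have hper : Efun l (-((((c + s : Fin l) : ℕ) : ℤ) * (p : ℕ)))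
        = Efun l (-(((((c : ℕ) : ℤ)) + (((s : ℕ) : ℤ))) * (p : ℕ))) := by
      apply Efun_congr
      have hd : (l : ℤ) ∣ ((((((c : ℕ) : ℤ)) + (((s : ℕ) : ℤ)))) - (((c + s : Fin l) : ℕ) : ℤ)) :=
        Int.ModEq.dvd hmod
      obtain ⟨d, hdd⟩ := hd
      refine ⟨d * (p : ℕ), ?_⟩
      linear_combination (((p : ℕ) : ℤ)) * hdd
    rw [hper]
    have hE : Efun l (-(((((c : ℕ) : ℤ)) + (((s : ℕ) : ℤ))) * (p : ℕ))) *
        Efun l ((((c : ℕ) : ℤ)) * (q : ℕ))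
        = Efun l ((((c : ℕ) : ℤ)) * ((((q : ℕ) : ℤ)) - (((p : ℕ) : ℤ)))) *
          Efun l (-((((s : ℕ) : ℤ)) * (p : ℕ))) := by
      rw [← Efun_add, ← Efun_add]
      congr 1
      ring
    calc (r * Efun l (-(((((c : ℕ) : ℤ)) + (((s : ℕ) : ℤ))) * (p : ℕ)))) * (A s i j : ℂ) *
          (r * Efun l ((((c : ℕ) : ℤ)) * (q : ℕ)))
        = (r * r) * ((Efun l (-(((((c : ℕ) : ℤ)) + (((s : ℕ) : ℤ))) * (p : ℕ))) *
            Efun l ((((c : ℕ) : ℤ)) * (q : ℕ))) * (A s i j : ℂ)) := by ring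
      _ = _ := by rw [hE]; ring
  simp only [step2]
  rw [Finset.sum_comm]
  -- Step 3: evaluate the geometric sum over c
  by_cases hpq : p = q
  · subst hpq
    rw [if_pos rfl, dftSlice_apply]
    refine Finset.sum_congr rfl fun s _ => ?_
    simp only [sub_self, mul_zero, Efun_zero, one_mul, Finset.sum_const, Finset.card_univ,
      Fintype.card_fin, nsmul_eq_mul]
    rw [hrr]
    have hln : ((l : ℕ) : ℂ) ≠ 0 := by exact_mod_cast (NeZero.ne l)
    push_cast
    field_simp
  · rw [if_neg hpq]
    have hnd : ¬ (l : ℤ) ∣ ((((q : ℕ) : ℤ)) - (((p : ℕ) : ℤ))) := by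
      intro hd
      have hq : (q : ℕ) < l := q.isLt
      have hp : (p : ℕ) < l := p.isLt
      have hne : (q : ℕ) ≠ (p : ℕ) := fun h => hpq (Fin.ext h.symm)
      have habs : |(((q : ℕ) : ℤ)) - (((p : ℕ) : ℤ))| < l := by
        rw [abs_lt]
        omega
      have := Int.eq_zero_of_abs_lt_dvd hd habs
      omega
    refine Finset.sum_eq_zero fun s _ => ?_
    rw [← Finset.mul_sum, ← Finset.sum_mul, sum_Efun_eq_zero l hnd, zero_mul, mul_zero]

/-- `(F_l ⊗ I_m)ᴴ · bcirc(A) · (F_l ⊗ I_n)` is block diagonal with diagonal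
blocks `D_k(A)`; moreover `D_0(A)` is real and `D_k(A) = conj(D_{l-k}(A))`. -/
theorem dft_block_diagonalizes_bcirc
    (m n l : ℕ) [NeZero l] (A : Fin l → Matrix (Fin m) (Fin n) ℝ) :
    (∀ (p q : Fin l) (i : Fin m) (j : Fin n), p ≠ q →
        ((Matrix.kroneckerMap (· * ·) (dftMatrix l) (1 : Matrix (Fin m) (Fin m) ℂ))ᴴ *
            (bcirc A).map (Complex.ofReal) *
            Matrix.kroneckerMap (· * ·) (dftMatrix l) (1 : Matrix (Fin n) (Fin n) ℂ))
          (p, i) (q, j) = 0) ∧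
    (∀ (p : Fin l) (i : Fin m) (j : Fin n),
        ((Matrix.kroneckerMap (· * ·) (dftMatrix l) (1 : Matrix (Fin m) (Fin m) ℂ))ᴴ *
            (bcirc A).map (Complex.ofReal) *
            Matrix.kroneckerMap (· * ·) (dftMatrix l) (1 : Matrix (Fin n) (Fin n) ℂ))
          (p, i) (p, j) = dftSlice A p i j) ∧
    (∀ (i : Fin m) (j : Fin n), (dftSlice A 0 i j).im = 0) ∧
    (∀ k : Fin l, dftSlice A k = (dftSlice A (-k)).map (starRingEnd ℂ)) := by
  refine ⟨fun p q i j hpq => ?_, fun p i j => ?_, fun i j => ?_, fun k => ?_⟩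
  · rw [bcirc_entry, if_neg hpq]
  · rw [bcirc_entry, if_pos rfl]
  · rw [dftSlice_apply]
    have h0 : ∀ s : Fin l, Efun l (-(((s : ℕ) : ℤ) * ((0 : Fin l) : ℕ))) = 1 := by
      intro s
      simp [Efun_zero]
    simp only [h0, one_mul]
    simp [Complex.im_sum]
  · ext i j
    rw [Matrix.map_apply, dftSlice_apply, dftSlice_apply, map_sum]
    refine Finset.sum_congr rfl fun s _ => ?_
    rw [_root_.map_mul, Efun_conj, Complex.conj_ofReal, neg_neg]
    congr 1
    apply Efun_congr
    have hval : ((((-k : Fin l) : ℕ)) + (k : ℕ)) % l = 0 := by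
      have h2 : (-k) + k = (0 : Fin l) := by simp
      have h3 : (((-k : Fin l) + k : Fin l) : ℕ) = 0 := by rw [h2]; rfl
      rw [Fin.add_def] at h3
      simpa using h3
    obtain ⟨d, hd⟩ := Nat.dvd_of_mod_eq_zero hval
    refine ⟨-((((s : ℕ) : ℤ)) * d), ?_⟩
    have hZ : ((((-k : Fin l) : ℕ)) : ℤ) + (((k : ℕ)) : ℤ) = (l : ℤ) * d := by exact_mod_cast hd
    linear_combination (-(((s : ℕ) : ℤ))) * hZ
end

section
/- Let A : Fin l → Matrix (Fin m) (Fin m) ℝ be a symmetric third-order tensor. Then the following are equivalent: (i) for every tensor X : Fin l → Matrix (Fin m) (Fin 1) ℝ, the tensor inner product ⟨X, A * X⟩ is nonnegative; (ii) the real symmetric matrix bcirc(A) is positive semidefinite. -/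
open Matrix

/-- `unfold` of a third-order tensor: the slices stacked vertically. -/
def unfoldT {m n l : ℕ} (A : Fin l → Matrix (Fin m) (Fin n) ℝ) :
    Matrix (Fin l × Fin m) (Fin n) ℝ :=
  Matrix.of fun ki j => A ki.1 ki.2 j

/-- `fold`, the inverse of `unfold`. -/
def foldT {m n l : ℕ} (M : Matrix (Fin l × Fin m) (Fin n) ℝ) :
    Fin l → Matrix (Fin m) (Fin n) ℝ :=
  fun k => Matrix.of fun i j => M (k, i) j

/-- The t-product of third-order tensors: `A * B = fold(bcirc(A) · unfold(B))`. -/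
def tMul {m n p l : ℕ} (A : Fin l → Matrix (Fin m) (Fin n) ℝ)
    (B : Fin l → Matrix (Fin n) (Fin p) ℝ) : Fin l → Matrix (Fin m) (Fin p) ℝ :=
  foldT (bcirc A * unfoldT B)

/-- The entrywise inner product of two third-order tensors. -/
def tdot {m n l : ℕ} (A B : Fin l → Matrix (Fin m) (Fin n) ℝ) : ℝ :=
  ∑ k : Fin l, ∑ i : Fin m, ∑ j : Fin n, A k i j * B k i j

lemma tdot_eq_quad {m l : ℕ} (A : Fin l → Matrix (Fin m) (Fin m) ℝ)
    (X : Fin l → Matrix (Fin m) (Fin 1) ℝ) :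
    tdot X (tMul A X) =
      (fun p : Fin l × Fin m => X p.1 p.2 0) ⬝ᵥ
        (bcirc A *ᵥ fun p : Fin l × Fin m => X p.1 p.2 0) := by
  simp [tdot, tMul, foldT, unfoldT, Matrix.mul_apply, Matrix.mulVec,
    dotProduct, Fintype.sum_prod_type, Fin.sum_univ_one]

/-- for a symmetric tensor `A`, `⟨X, A * X⟩ ≥ 0` for all tensors
`X ∈ ℝ^{m×1×l}` iff `bcirc(A)` is positive semidefinite. -/
theorem tPosSemidef_iff_bcirc_posSemidef
    (m l : ℕ) (A : Fin l → Matrix (Fin m) (Fin m) ℝ)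
    (hsymm : ∀ k : Fin l, (A k)ᵀ = A (-k)) :
    (∀ X : Fin l → Matrix (Fin m) (Fin 1) ℝ, 0 ≤ tdot X (tMul A X)) ↔
      (bcirc A).PosSemidef := by
  have herm : (bcirc A).IsHermitian := by
    ext ⟨p, i⟩ ⟨q, j⟩
    simp only [Matrix.conjTranspose_apply, bcirc, Matrix.of_apply, star_trivial]
    have h1 := congrFun (congrFun (hsymm (q - p)) i) j
    simp only [Matrix.transpose_apply] at h1
    haveI : NeZero l := ⟨fun h => (h ▸ p).elim0⟩
    rw [h1, neg_sub]
  constructor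
  · intro h
    refine Matrix.PosSemidef.of_dotProduct_mulVec_nonneg herm fun x => ?_
    have := h (fun k => Matrix.of fun i _ => x (k, i))
    rw [tdot_eq_quad] at this
    simpa using this
  · intro h X
    rw [tdot_eq_quad]
    simpa using h.dotProduct_mulVec_nonneg (fun p : Fin l × Fin m => X p.1 p.2 0)
end

section
/- Weak duality for semidefinite programming over third-order tensors: let C and A_1, …, A_r be symmetric tensors in ℝ^{m×m×l} and b ∈ ℝ^r. If X is a symmetric tensor with ⟨A_i, X⟩ = b_i for all i = 1, …, r and bcirc(X) positive semidefinite, and if y ∈ ℝ^r and S is a symmetric tensor with Σ_{i=1}^r y_i · A_i + S = C and bcirc(S) positive semidefinite, then Σ_{i=1}^r b_i y_i ≤ ⟨C, X⟩. -/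
open Matrix

lemma psd_trace_nonneg {n : Type*} [Fintype n] [DecidableEq n] {M : Matrix n n ℝ} (hM : M.PosSemidef) :
    0 ≤ M.trace := by
  rw [Matrix.trace]
  apply Finset.sum_nonneg
  intro i _
  exact hM.diag_nonneg

lemma psd_mul_trace_nonneg {n : Type*} [Fintype n] [DecidableEq n] {M N : Matrix n n ℝ}
    (hM : M.PosSemidef) (hN : N.PosSemidef) : 0 ≤ (M * N).trace := by
  open scoped MatrixOrder Matrix.Norms.L2Operator in obtain ⟨B, rfl⟩ := CStarAlgebra.nonneg_iff_eq_star_mul_self.mp hM.nonneg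
  rw [Matrix.mul_assoc, Matrix.trace_mul_comm]
  exact psd_trace_nonneg (hN.mul_mul_conjTranspose_same B)

lemma tdot_add {m n l : ℕ} (A B C : Fin l → Matrix (Fin m) (Fin n) ℝ) :
    tdot (A + B) C = tdot A C + tdot B C := by
  simp [tdot, add_mul, Finset.sum_add_distrib]

lemma tdot_smul {m n l : ℕ} (c : ℝ) (A B : Fin l → Matrix (Fin m) (Fin n) ℝ) :
    tdot (c • A) B = c * tdot A B := by
  simp [tdot, Finset.mul_sum, mul_assoc]

lemma tdot_zero {m n l : ℕ} (B : Fin l → Matrix (Fin m) (Fin n) ℝ) :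
    tdot 0 B = 0 := by simp [tdot]

lemma tdot_sum {m n l : ℕ} {ι : Type*} (s : Finset ι)
    (f : ι → Fin l → Matrix (Fin m) (Fin n) ℝ)
    (B : Fin l → Matrix (Fin m) (Fin n) ℝ) :
    tdot (∑ i ∈ s, f i) B = ∑ i ∈ s, tdot (f i) B := by
  classical
  induction s using Finset.induction_on with
  | empty => simp [tdot_zero]
  | insert _ _ h ih => rw [Finset.sum_insert h, Finset.sum_insert h, tdot_add, ih]

lemma trace_bcirc_mul {m l : ℕ} [NeZero l] (S X : Fin l → Matrix (Fin m) (Fin m) ℝ)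
    (hXsymm : ∀ k : Fin l, (X k)ᵀ = X (-k)) :
    (bcirc S * bcirc X).trace = l * tdot S X := by
  have hX : ∀ (k : Fin l) (i j : Fin m), X k j i = X (-k) i j := by
    intro k i j
    rw [← hXsymm k]; rfl
  simp only [Matrix.trace, Matrix.diag, Matrix.mul_apply, bcirc, Matrix.of_apply]
  rw [Fintype.sum_prod_type]
  have step : ∀ (p : Fin l) (i : Fin m),
      (∑ q : Fin l × Fin m, S (p - q.1) i q.2 * X (q.1 - p) q.2 i)
      = ∑ k : Fin l, ∑ j : Fin m, S k i j * X k i j := by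
    intro p i
    rw [Fintype.sum_prod_type]
    refine Fintype.sum_equiv (Equiv.subLeft p) _ _ fun k => ?_
    refine Finset.sum_congr rfl fun j _ => ?_
    show S (p - k) i j * X (k - p) j i = S (p - k) i j * X (p - k) i j
    rw [hX, neg_sub]
  simp_rw [step]
  rw [Finset.sum_const, Finset.card_univ, Fintype.card_fin, nsmul_eq_mul, tdot]
  congr 1
  exact Finset.sum_comm

/-- weak duality for T-SDP: any primal feasible `X` and dual feasible
`(y, S)` satisfy `Σ_i b_i y_i ≤ ⟨C, X⟩`. -/
theorem tsdp_weak_duality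
    (m l r : ℕ)
    (C : Fin l → Matrix (Fin m) (Fin m) ℝ)
    (A : Fin r → Fin l → Matrix (Fin m) (Fin m) ℝ)
    (b : Fin r → ℝ)
    (hCsymm : ∀ k : Fin l, (C k)ᵀ = C (-k))
    (hAsymm : ∀ (i : Fin r) (k : Fin l), (A i k)ᵀ = A i (-k))
    (X : Fin l → Matrix (Fin m) (Fin m) ℝ)
    (hXsymm : ∀ k : Fin l, (X k)ᵀ = X (-k))
    (hXfeas : ∀ i : Fin r, tdot (A i) X = b i)
    (hXpsd : (bcirc X).PosSemidef)
    (y : Fin r → ℝ)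
    (S : Fin l → Matrix (Fin m) (Fin m) ℝ)
    (hSsymm : ∀ k : Fin l, (S k)ᵀ = S (-k))
    (hdualfeas : (∑ i : Fin r, y i • A i) + S = C)
    (hSpsd : (bcirc S).PosSemidef) :
    ∑ i : Fin r, b i * y i ≤ tdot C X := by
  have h0 : 0 ≤ tdot S X := by
    rcases Nat.eq_zero_or_pos l with rfl | hl
    · simp [tdot]
    · haveI : NeZero l := ⟨hl.ne'⟩
      have ht := psd_mul_trace_nonneg hSpsd hXpsd
      rw [trace_bcirc_mul S X hXsymm] at ht
      have hl' : (0:ℝ) < l := by exact_mod_cast hl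
      nlinarith
  have key : tdot C X = (∑ i : Fin r, y i * tdot (A i) X) + tdot S X := by
    rw [← hdualfeas, tdot_add, tdot_sum]
    congr 1
    exact Finset.sum_congr rfl fun i _ => tdot_smul (y i) (A i) X
  have hb : ∑ i : Fin r, b i * y i = ∑ i : Fin r, y i * tdot (A i) X :=
    Finset.sum_congr rfl fun i _ => by rw [hXfeas i, mul_comm]
  rw [key, hb]
  linarith
end

section
/- Strong duality for semidefinite programming over third-order tensors: let C and A_1, …, A_r be symmetric tensors in ℝ^{m×m×l} and b ∈ ℝ^r. Suppose there exists a strictly feasible symmetric tensor X̂ (i.e. ⟨A_i, X̂⟩ = b_i for all i and bcirc(X̂) is positive definite), and suppose the primal optimal value p* := inf { ⟨C, X⟩ : X symmetric, ⟨A_i, X⟩ = b_i for all i, bcirc(X) positive semidefinite } is finite. Then the dual problem is solvable with no duality gap: there exist y ∈ ℝ^r and a symmetric tensor S with Σ_{i=1}^r y_i · A_i + S = C, bcirc(S) positive semidefinite, and Σ_{i=1}^r b_i y_i = p*. -/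
open Matrix

namespace TSDP

variable {m l : ℕ}

abbrev W (m l : ℕ) := Fin l → Matrix (Fin m) (Fin m) ℝ

lemma tdot_add_right (A X Y : W m l) : tdot A (X + Y) = tdot A X + tdot A Y := by
  simp [tdot, Pi.add_apply, Matrix.add_apply, mul_add, Finset.sum_add_distrib]

lemma tdot_smul_right (c : ℝ) (A X : W m l) : tdot A (c • X) = c * tdot A X := by
  simp only [tdot, Pi.smul_apply, Matrix.smul_apply, smul_eq_mul, Finset.mul_sum]
  refine Finset.sum_congr rfl fun k _ => Finset.sum_congr rfl fun i _ =>
    Finset.sum_congr rfl fun j _ => by ring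

lemma tdot_comm (A B : W m l) : tdot A B = tdot B A := by
  simp [tdot, mul_comm]

lemma tdot_add_left (A B X : W m l) : tdot (A + B) X = tdot A X + tdot B X := by
  rw [tdot_comm, tdot_add_right, tdot_comm X A, tdot_comm X B]

lemma tdot_smul_left (c : ℝ) (A X : W m l) : tdot (c • A) X = c * tdot A X := by
  rw [tdot_comm, tdot_smul_right, tdot_comm X A]

lemma tdot_sub_left (A B X : W m l) : tdot (A - B) X = tdot A X - tdot B X := by
  have h := tdot_add_left (A - B) B X
  simp only [sub_add_cancel] at h
  linarith

lemma tdot_sum_left {ι : Type*} (s : Finset ι) (F : ι → W m l) (X : W m l) :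
    tdot (∑ i ∈ s, F i) X = ∑ i ∈ s, tdot (F i) X := by
  induction s using Finset.cons_induction with
  | empty => simp [tdot]
  | cons a s ha ih => rw [Finset.sum_cons, tdot_add_left, ih, Finset.sum_cons]

/-- symmetrization -/
noncomputable def symP (X : W m l) : W m l := fun k => (2:ℝ)⁻¹ • (X k + (X (-k))ᵀ)

lemma symP_symm (X : W m l) (k : Fin l) : ((symP X) k)ᵀ = symP X (-k) := by
  ext i j
  simp [symP, Matrix.transpose_apply, Matrix.add_apply, Matrix.smul_apply, neg_neg, add_comm]
  ring

lemma symP_eq_of_symm {X : W m l} (h : ∀ k, (X k)ᵀ = X (-k)) : symP X = X := by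
  funext k
  have h2 : (X (-k))ᵀ = X k := by rw [h (-k), neg_neg]
  have h3 : X (-k) = (X k)ᵀ := by rw [← h2, transpose_transpose]
  ext i j
  simp [symP, h3, Matrix.transpose_apply, Matrix.add_apply, Matrix.smul_apply]
  ring

/-- symmetrization as a linear map -/
noncomputable def symL (m l : ℕ) : W m l →ₗ[ℝ] W m l where
  toFun := symP
  map_add' X Y := by
    funext k; ext i j
    simp [symP, Matrix.add_apply, Matrix.smul_apply, Matrix.transpose_apply, Pi.add_apply]
    ring
  map_smul' c X := by
    funext k; ext i j
    simp [symP, Matrix.add_apply, Matrix.smul_apply, Matrix.transpose_apply, Pi.smul_apply,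
      smul_eq_mul]
    ring

/-- tdot with fixed left argument, in the symmetrized variable, as a linear map -/
noncomputable def tdL (C : W m l) : W m l →ₗ[ℝ] ℝ where
  toFun X := tdot C X
  map_add' X Y := tdot_add_right C X Y
  map_smul' c X := by simp [tdot_smul_right, smul_eq_mul]

/-- bcirc ∘ symP as a linear map  -/
noncomputable def bsymL (m l : ℕ) : W m l →ₗ[ℝ] Matrix (Fin l × Fin m) (Fin l × Fin m) ℝ where
  toFun X := bcirc (symP X)
  map_add' X Y := by
    ext p q
    have : symP (X + Y) = symP X + symP Y := (symL m l).map_add X Y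
    simp [bcirc, this, Matrix.add_apply, Pi.add_apply]
  map_smul' c X := by
    ext p q
    have : symP (c • X) = c • symP X := (symL m l).map_smul c X
    simp [bcirc, this, Matrix.smul_apply, Pi.smul_apply]

end TSDP

section Dual
open TSDP
variable {m l : ℕ}

lemma bcirc_isHermitian [NeZero l] {S : W m l} (hS : ∀ k, (S k)ᵀ = S (-k)) :
    (bcirc S).IsHermitian := by
  ext ⟨p, i⟩ ⟨q, j⟩
  simp only [Matrix.conjTranspose_apply, bcirc, Matrix.of_apply, star_trivial]
  have : S (q - p) j i = (S (q - p))ᵀ i j := rfl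
  rw [this, hS (q - p), neg_sub]

lemma dual_cone_psd [NeZero l] {S : W m l} (hS : ∀ k, (S k)ᵀ = S (-k))
    (h : ∀ X : W m l, (∀ k, (X k)ᵀ = X (-k)) → (bcirc X).PosSemidef → 0 ≤ tdot S X) :
    (bcirc S).PosSemidef := by
  refine Matrix.PosSemidef.of_dotProduct_mulVec_nonneg (bcirc_isHermitian hS) fun v => ?_
  set N : W m l := fun d => Matrix.of fun i j => ∑ k : Fin l, v (d + k, i) * v (k, j) with hN
  have hNsymm : ∀ d, (N d)ᵀ = N (-d) := by
    intro d
    ext i j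
    simp only [hN, Matrix.transpose_apply, Matrix.of_apply]
    refine Fintype.sum_equiv (Equiv.addLeft d) _ _ fun k => ?_
    simp only [Equiv.coe_addLeft]
    have h1 : -d + (d + k) = k := by abel
    rw [h1, mul_comm]
  -- quadratic form of bcirc N is a sum of squares
  have hquad : ∀ x : Fin l × Fin m → ℝ,
      dotProduct x ((bcirc N) *ᵥ x) =
        ∑ t : Fin l, (∑ p : Fin l × Fin m, x p * v (p.1 + t, p.2)) ^ 2 := by
    intro x
    have key : ∀ a b : Fin l × Fin m,
        x a * ((bcirc N) a b * x b) =
          ∑ t : Fin l, (x a * v (a.1 + t, a.2)) * (x b * v (b.1 + t, b.2)) := by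
      intro a b
      simp only [bcirc, hN, Matrix.of_apply, Finset.mul_sum, Finset.sum_mul]
      refine (Fintype.sum_equiv (Equiv.addLeft b.1) _ _ fun t => ?_).symm
      simp only [Equiv.coe_addLeft]
      have h1 : a.1 - b.1 + (b.1 + t) = a.1 + t := by abel
      rw [h1]
      ring
    simp only [dotProduct, Matrix.mulVec, Finset.mul_sum]
    calc ∑ a : Fin l × Fin m, ∑ b : Fin l × Fin m,
            x a * ((bcirc N) a b * x b)
        = ∑ a : Fin l × Fin m, ∑ b : Fin l × Fin m,
            ∑ t : Fin l, (x a * v (a.1 + t, a.2)) * (x b * v (b.1 + t, b.2)) := by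
          exact Finset.sum_congr rfl fun a _ => Finset.sum_congr rfl fun b _ => key a b
      _ = ∑ t : Fin l, ∑ a : Fin l × Fin m, ∑ b : Fin l × Fin m,
            (x a * v (a.1 + t, a.2)) * (x b * v (b.1 + t, b.2)) := by
          exact (Finset.sum_congr rfl fun a _ => Finset.sum_comm).trans Finset.sum_comm
      _ = ∑ t : Fin l, (∑ p : Fin l × Fin m, x p * v (p.1 + t, p.2)) ^ 2 := by
          refine Finset.sum_congr rfl fun t _ => ?_
          rw [sq, Finset.sum_mul_sum]
  have hNpsd : (bcirc N).PosSemidef := by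
    refine Matrix.PosSemidef.of_dotProduct_mulVec_nonneg (bcirc_isHermitian hNsymm) fun x => ?_
    have hsx : star x = x := star_trivial x
    rw [hsx, hquad]
    exact Finset.sum_nonneg fun t _ => sq_nonneg _
  have hmain : 0 ≤ tdot S N := h N hNsymm hNpsd
  have hsv : star v = v := star_trivial v
  rw [hsv]
  -- identify the quadratic form of S at v with tdot S N
  have hid : dotProduct v ((bcirc S) *ᵥ v) = tdot S N := by
    have e1 : dotProduct v ((bcirc S) *ᵥ v) =
        ∑ a : Fin l × Fin m, ∑ b : Fin l × Fin m,
          v a * ((bcirc S) a b * v b) := by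
      simp only [dotProduct, Matrix.mulVec, Finset.mul_sum]
    rw [e1]
    rw [Fintype.sum_prod_type]
    calc ∑ p : Fin l, ∑ i : Fin m, ∑ b : Fin l × Fin m,
            v (p, i) * ((bcirc S) (p, i) b * v b)
        = ∑ p : Fin l, ∑ i : Fin m, ∑ q : Fin l, ∑ j : Fin m,
            v (p, i) * (S (p - q) i j * v (q, j)) := by
          refine Finset.sum_congr rfl fun p _ => Finset.sum_congr rfl fun i _ => ?_
          rw [Fintype.sum_prod_type]
          rfl
      _ = ∑ p : Fin l, ∑ q : Fin l, ∑ i : Fin m, ∑ j : Fin m,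
            v (p, i) * (S (p - q) i j * v (q, j)) := by
          exact Finset.sum_congr rfl fun p _ => Finset.sum_comm
      _ = ∑ q : Fin l, ∑ p : Fin l, ∑ i : Fin m, ∑ j : Fin m,
            v (p, i) * (S (p - q) i j * v (q, j)) := Finset.sum_comm
      _ = ∑ q : Fin l, ∑ d : Fin l, ∑ i : Fin m, ∑ j : Fin m,
            v (d + q, i) * (S d i j * v (q, j)) := by
          refine Finset.sum_congr rfl fun q _ => ?_
          refine (Fintype.sum_equiv (Equiv.addRight q) _ _ fun d => ?_).symm
          simp only [Equiv.coe_addRight]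
          have h1 : d + q - q = d := by abel
          rw [h1]
      _ = ∑ d : Fin l, ∑ q : Fin l, ∑ i : Fin m, ∑ j : Fin m,
            v (d + q, i) * (S d i j * v (q, j)) := Finset.sum_comm
      _ = ∑ d : Fin l, ∑ i : Fin m, ∑ q : Fin l, ∑ j : Fin m,
            v (d + q, i) * (S d i j * v (q, j)) := by
          exact Finset.sum_congr rfl fun d _ => Finset.sum_comm
      _ = ∑ d : Fin l, ∑ i : Fin m, ∑ j : Fin m, ∑ q : Fin l,
            v (d + q, i) * (S d i j * v (q, j)) := by
          exact Finset.sum_congr rfl fun d _ => Finset.sum_congr rfl fun i _ =>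
            Finset.sum_comm
      _ = tdot S N := by
          simp only [tdot, hN, Matrix.of_apply, Finset.mul_sum]
          refine Finset.sum_congr rfl fun d _ => Finset.sum_congr rfl fun i _ =>
            Finset.sum_congr rfl fun j _ => Finset.sum_congr rfl fun q _ => by ring
  rw [hid]
  exact hmain

end Dual

section Open
open TSDP

variable {m l : ℕ}

lemma posDef_add_posSemidef {n : Type*} [Fintype n] {M N : Matrix n n ℝ}
    (hM : M.PosDef) (hN : N.PosSemidef) : (M + N).PosDef :=
  Matrix.PosDef.of_dotProduct_mulVec_pos (hM.1.add hN.1) fun x hx => by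
    rw [Matrix.add_mulVec, dotProduct_add]
    exact add_pos_of_pos_of_nonneg (hM.dotProduct_mulVec_pos hx) (hN.dotProduct_mulVec_nonneg x)

lemma posDef_smul {n : Type*} [Fintype n] {M : Matrix n n ℝ} {c : ℝ}
    (hc : 0 < c) (hM : M.PosDef) : (c • M).PosDef := by
  refine Matrix.PosDef.of_dotProduct_mulVec_pos ?_ ?_
  · show (c • M)ᴴ = c • M
    rw [Matrix.conjTranspose_smul, hM.1]
    simp
  · intro x hx
    rw [Matrix.smul_mulVec, dotProduct_smul, smul_eq_mul]
    exact mul_pos hc (hM.dotProduct_mulVec_pos hx)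

lemma posSemidef_smul {n : Type*} [Fintype n] {M : Matrix n n ℝ} {c : ℝ}
    (hc : 0 ≤ c) (hM : M.PosSemidef) : (c • M).PosSemidef := by
  refine Matrix.PosSemidef.of_dotProduct_mulVec_nonneg ?_ ?_
  · show (c • M)ᴴ = c • M
    rw [Matrix.conjTranspose_smul, hM.1]
    simp
  · intro x
    rw [Matrix.smul_mulVec, dotProduct_smul, smul_eq_mul]
    exact mul_nonneg hc (hM.dotProduct_mulVec_nonneg x)

lemma continuous_qform [NeZero l] :
    Continuous fun z : (W m l) × ((Fin l × Fin m) → ℝ) =>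
      ∑ a : Fin l × Fin m, z.2 a * ∑ b : Fin l × Fin m, bcirc (symP z.1) a b * z.2 b := by
  have hb : Continuous fun z : (W m l) × ((Fin l × Fin m) → ℝ) => bcirc (symP z.1) :=
    ((bsymL m l).continuous_of_finiteDimensional).comp continuous_fst
  refine continuous_finset_sum _ fun a _ => Continuous.mul
    ((continuous_apply a).comp continuous_snd)
    (continuous_finset_sum _ fun b _ => Continuous.mul (hb.matrix_elem a b)
      ((continuous_apply b).comp continuous_snd))

lemma qform_eq [NeZero l] (X : W m l) (v : (Fin l × Fin m) → ℝ) :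
    dotProduct v ((bcirc (symP X)) *ᵥ v) =
      ∑ a : Fin l × Fin m, v a * ∑ b : Fin l × Fin m, bcirc (symP X) a b * v b := by
  simp only [dotProduct, Matrix.mulVec]

lemma isOpen_posdef_set [NeZero l] :
    IsOpen {X : W m l | (bcirc (symP X)).PosDef} := by
  rw [isOpen_iff_forall_mem_open]
  intro X0 hX0
  set Sp := Metric.sphere (0 : (Fin l × Fin m) → ℝ) 1 with hSpdef
  have hSp : IsCompact Sp := isCompact_sphere 0 1
  have hO : IsOpen {z : (W m l) × ((Fin l × Fin m) → ℝ) |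
      0 < ∑ a : Fin l × Fin m, z.2 a * ∑ b : Fin l × Fin m, bcirc (symP z.1) a b * z.2 b} :=
    isOpen_lt continuous_const continuous_qform
  have hsub : ({X0} ×ˢ Sp) ⊆ {z : (W m l) × ((Fin l × Fin m) → ℝ) |
      0 < ∑ a : Fin l × Fin m, z.2 a * ∑ b : Fin l × Fin m, bcirc (symP z.1) a b * z.2 b} := by
    rintro ⟨X, v⟩ ⟨hX, hv⟩
    simp only [Set.mem_singleton_iff] at hX
    subst hX
    have hvnorm : ‖v‖ = 1 := by
      rw [← dist_zero_right]
      exact Metric.mem_sphere.mp hv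
    have hvne : v ≠ 0 := by
      intro h0
      rw [h0, norm_zero] at hvnorm
      exact one_ne_zero hvnorm.symm
    have := Matrix.PosDef.dotProduct_mulVec_pos hX0 hvne
    rw [star_trivial, qform_eq] at this
    exact this
  obtain ⟨u, w, hu, _, hXu, hSw, huw⟩ :=
    generalized_tube_lemma isCompact_singleton hSp hO hsub
  refine ⟨u, fun X hX => ?_, hu, hXu rfl⟩
  refine Matrix.PosDef.of_dotProduct_mulVec_pos (bcirc_isHermitian (symP_symm X)) fun v hv => ?_
  rw [star_trivial]
  have hc : (0:ℝ) < ‖v‖ := lt_of_le_of_ne (norm_nonneg v) (Ne.symm (norm_ne_zero_iff.mpr hv))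
  set w0 : (Fin l × Fin m) → ℝ := ‖v‖⁻¹ • v with hw0
  have hw0sp : w0 ∈ Sp := by
    rw [hSpdef, Metric.mem_sphere, dist_zero_right, hw0, norm_smul]
    have h2 : ‖(‖v‖⁻¹ : ℝ)‖ = ‖v‖⁻¹ := by
      rw [Real.norm_eq_abs, abs_of_pos (by positivity)]
    rw [h2, inv_mul_cancel₀ hc.ne']
  have hmem : (X, w0) ∈ {z : (W m l) × ((Fin l × Fin m) → ℝ) |
      0 < ∑ a : Fin l × Fin m, z.2 a * ∑ b : Fin l × Fin m, bcirc (symP z.1) a b * z.2 b} :=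
    huw ⟨hX, hSw hw0sp⟩
  have hpos : 0 < dotProduct w0 ((bcirc (symP X)) *ᵥ w0) := by
    rw [qform_eq]; exact hmem
  have hveq : v = ‖v‖ • w0 := by
    rw [hw0, smul_smul, mul_inv_cancel₀ hc.ne', one_smul]
  rw [hveq, Matrix.mulVec_smul, smul_dotProduct, dotProduct_smul]
  simp only [smul_eq_mul]
  positivity

end Open

section Aux

lemma affine_le {a c u : ℝ} (h : ∀ ε : ℝ, 0 < ε → ε ≤ 1 → a + ε * c ≤ u) : a ≤ u := by
  by_contra hlt
  push_neg at hlt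
  rcases le_or_gt 0 c with hc | hc
  · have h1 := h 1 one_pos le_rfl
    nlinarith
  · set ε := min 1 ((u - a) / (2 * c)) with hε
    have hq : 0 < (u - a) / (2 * c) := div_pos_of_neg_of_neg (by linarith) (by linarith)
    have hεpos : 0 < ε := lt_min one_pos hq
    have hε1 : ε ≤ 1 := min_le_left _ _
    have hmin : ε ≤ (u - a) / (2 * c) := min_le_right _ _
    have h1 := h ε hεpos hε1
    have hbc : (u - a) / (2 * c) * c = (u - a) / 2 := by
      field_simp [hc.ne]
    nlinarith [mul_nonneg (sub_nonneg.mpr hmin) (neg_nonneg.mpr hc.le)]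

lemma bdd_below_linear {A B L : ℝ} (h : ∀ c : ℝ, L ≤ A + c * B) : B = 0 := by
  by_contra hB
  have h1 := h ((L - A - 1) / B)
  rw [div_mul_cancel₀ _ hB] at h1
  linarith

lemma le_of_forall_pos_add {a u : ℝ} (h : ∀ δ : ℝ, 0 < δ → a ≤ u + δ) : a ≤ u := by
  by_contra hlt
  push_neg at hlt
  have h1 := h ((a - u) / 2) (by linarith)
  linarith

lemma factor_through {W' : Type*} [AddCommGroup W'] [Module ℝ W'] {r : ℕ}
    (M : W' →ₗ[ℝ] (Fin r → ℝ)) (g : W' →ₗ[ℝ] ℝ) (h0 : ∀ Z, M Z = 0 → g Z = 0) :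
    ∃ y : Fin r → ℝ, ∀ X, g X = ∑ i, M X i * y i := by
  have hker : LinearMap.ker M ≤ LinearMap.ker g := fun Z hZ => by
    simp only [LinearMap.mem_ker] at *
    exact h0 Z hZ
  set q : (W' ⧸ LinearMap.ker M) →ₗ[ℝ] ℝ := Submodule.liftQ _ g hker with hq
  set h : LinearMap.range M →ₗ[ℝ] ℝ :=
    q.comp (M.quotKerEquivRange.symm : LinearMap.range M →ₗ[ℝ] W' ⧸ LinearMap.ker M) with hh
  obtain ⟨G, hG⟩ := LinearMap.exists_extend h
  refine ⟨fun i => G (Pi.single i 1), fun X => ?_⟩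
  have hmem : M X ∈ LinearMap.range M := LinearMap.mem_range_self M X
  have e1 : g X = q (Submodule.Quotient.mk X) := (Submodule.liftQ_apply _ g X).symm
  have e2 : M.quotKerEquivRange.symm ⟨M X, hmem⟩ = Submodule.Quotient.mk X := by
    have := LinearMap.quotKerEquivRange_symm_apply_image M X hmem
    rw [this]
    rfl
  have e3 : g X = h ⟨M X, hmem⟩ := by
    rw [e1, hh, LinearMap.comp_apply]
    congr 1
    exact e2.symm
  have e4 : G (M X) = h ⟨M X, hmem⟩ := by
    rw [← hG]
    rfl
  rw [e3, ← e4, LinearMap.pi_apply_eq_sum_univ G (M X)]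
  refine Finset.sum_congr rfl fun i _ => ?_
  rw [smul_eq_mul]
  congr 1
  congr 1
  funext j
  simp [Pi.single_apply, eq_comm]


open TSDP in
/-- strong duality for T-SDP: if the primal is strictly feasible and its
optimal value `p*` is finite, then the dual is solvable and attains `p*`. -/
theorem tsdp_strong_duality
    (m l r : ℕ)
    (C : Fin l → Matrix (Fin m) (Fin m) ℝ)
    (A : Fin r → Fin l → Matrix (Fin m) (Fin m) ℝ)
    (b : Fin r → ℝ)
    (hCsymm : ∀ k : Fin l, (C k)ᵀ = C (-k))
    (hAsymm : ∀ (i : Fin r) (k : Fin l), (A i k)ᵀ = A i (-k))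
    (Xhat : Fin l → Matrix (Fin m) (Fin m) ℝ)
    (hXhatsymm : ∀ k : Fin l, (Xhat k)ᵀ = Xhat (-k))
    (hXhatfeas : ∀ i : Fin r, tdot (A i) Xhat = b i)
    (hXhatpd : (bcirc Xhat).PosDef)
    (pstar : ℝ)
    (hpstar : IsGLB {v : ℝ | ∃ X : Fin l → Matrix (Fin m) (Fin m) ℝ,
        (∀ k : Fin l, (X k)ᵀ = X (-k)) ∧ (∀ i : Fin r, tdot (A i) X = b i) ∧
          (bcirc X).PosSemidef ∧ v = tdot C X} pstar) :
    ∃ (y : Fin r → ℝ) (S : Fin l → Matrix (Fin m) (Fin m) ℝ),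
      (∀ k : Fin l, (S k)ᵀ = S (-k)) ∧
      (∑ i : Fin r, y i • A i) + S = C ∧
      (bcirc S).PosSemidef ∧
      ∑ i : Fin r, b i * y i = pstar := by
  classical
  rcases Nat.eq_zero_or_pos l with hl0 | hlpos
  · -- degenerate case l = 0
    subst hl0
    have hempty : ∀ (P Q : Fin 0 → Matrix (Fin m) (Fin m) ℝ), tdot P Q = 0 := by
      intro P Q; simp [tdot]
    have hpsd : ∀ (X : Fin 0 → Matrix (Fin m) (Fin m) ℝ), (bcirc X).PosSemidef := by
      intro X
      refine Matrix.PosSemidef.of_dotProduct_mulVec_nonneg ?_ ?_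
      · ext ⟨p, i⟩ ⟨q, j⟩
        exact p.elim0
      · intro x
        rw [show (bcirc X) *ᵥ x = 0 from funext fun a => a.1.elim0]
        simp
    have hset : {v : ℝ | ∃ X : Fin 0 → Matrix (Fin m) (Fin m) ℝ,
        (∀ k : Fin 0, (X k)ᵀ = X (-k)) ∧ (∀ i : Fin r, tdot (A i) X = b i) ∧
          (bcirc X).PosSemidef ∧ v = tdot C X} = {0} := by
      ext v
      constructor
      · rintro ⟨X, -, -, -, rfl⟩
        simp [hempty]
      · rintro rfl
        exact ⟨fun k => k.elim0, fun k => k.elim0,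
          fun i => by rw [hempty, ← hXhatfeas i, hempty], hpsd _, (hempty _ _).symm⟩
    have hps0 : pstar = 0 := by
      rw [hset] at hpstar
      exact (isGLB_singleton.unique hpstar).symm
    refine ⟨0, C, fun k => k.elim0, Subsingleton.elim _ _, hpsd C, by simp [hps0]⟩
  haveI : NeZero l := ⟨hlpos.ne'⟩
  -- linear maps
  obtain ⟨M, hM⟩ : ∃ M : W m l →ₗ[ℝ] (Fin r → ℝ),
      M = LinearMap.pi (fun i => (tdL (A i)).comp (symL m l)) := ⟨_, rfl⟩
  obtain ⟨tC, htCdef⟩ : ∃ tC : W m l →ₗ[ℝ] ℝ, tC = (tdL C).comp (symL m l) := ⟨_, rfl⟩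
  have hMapp : ∀ (X : W m l) (i : Fin r), M X i = tdot (A i) (symP X) := by
    intro X i; rw [hM]; rfl
  have htC : ∀ X : W m l, tC X = tdot C (symP X) := by
    intro X; rw [htCdef]; rfl
  have hbs : ∀ Z : W m l, bcirc (symP Z) = bsymL m l Z := fun _ => rfl
  have hXhatP : symP Xhat = Xhat := symP_eq_of_symm hXhatsymm
  -- the two convex sets
  set Ω : Set ((W m l) × ℝ) :=
    {p | (bcirc (symP p.1)).PosDef ∧ tC p.1 < p.2} with hΩdef
  set D : Set ((W m l) × ℝ) := {p | M p.1 = b ∧ p.2 ≤ pstar} with hDdef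
  have hΩopen : IsOpen Ω := by
    refine IsOpen.inter (isOpen_posdef_set.preimage continuous_fst) ?_
    exact isOpen_lt (tC.continuous_of_finiteDimensional.comp continuous_fst) continuous_snd
  have hΩconv : Convex ℝ Ω := by
    rintro ⟨X, v⟩ ⟨hp1, hp2⟩ ⟨Y, w⟩ ⟨hq1, hq2⟩ a a' ha ha' hab
    rcases eq_or_lt_of_le ha with rfl | hapos
    · have ha1 : a' = 1 := by linarith
      subst ha1
      simp only [zero_smul, one_smul, zero_add]
      exact ⟨hq1, hq2⟩
    rcases eq_or_lt_of_le ha' with rfl | ha'pos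
    · have ha1 : a = 1 := by linarith
      subst ha1
      simp only [zero_smul, one_smul, add_zero]
      exact ⟨hp1, hp2⟩
    refine ⟨?_, ?_⟩
    · show (bcirc (symP (a • X + a' • Y))).PosDef
      rw [hbs, map_add, _root_.map_smul, _root_.map_smul, ← hbs, ← hbs]
      exact posDef_add_posSemidef (posDef_smul hapos hp1)
        (posDef_smul ha'pos hq1).posSemidef
    · show tC (a • X + a' • Y) < (a • ((X, v) : (W m l) × ℝ) + a' • (Y, w)).2
      have he : tC (a • X + a' • Y) = a * tC X + a' * tC Y := by
        rw [map_add, _root_.map_smul, _root_.map_smul, smul_eq_mul, smul_eq_mul]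
      rw [he]
      show a * tC X + a' * tC Y < a * v + a' * w
      exact add_lt_add (mul_lt_mul_of_pos_left hp2 hapos)
        (mul_lt_mul_of_pos_left hq2 ha'pos)
  have hDconv : Convex ℝ D := by
    rintro ⟨X, v⟩ ⟨hp1, hp2⟩ ⟨Y, w⟩ ⟨hq1, hq2⟩ a a' ha ha' hab
    refine ⟨?_, ?_⟩
    · show M (a • X + a' • Y) = b
      rw [map_add, _root_.map_smul, _root_.map_smul, hp1, hq1]
      funext i
      simp only [Pi.add_apply, Pi.smul_apply, smul_eq_mul]
      rw [← add_mul, hab, one_mul]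
    · show a * v + a' * w ≤ pstar
      calc a * v + a' * w ≤ a * pstar + a' * pstar :=
            add_le_add (mul_le_mul_of_nonneg_left hp2 ha)
              (mul_le_mul_of_nonneg_left hq2 ha')
        _ = pstar := by rw [← add_mul, hab, one_mul]
  have hdisj : Disjoint Ω D := by
    rw [Set.disjoint_left]
    rintro ⟨X, v⟩ ⟨hpd, hlt⟩ ⟨hfeas, hle⟩
    have hmem : tdot C (symP X) ∈ {v : ℝ | ∃ X : Fin l → Matrix (Fin m) (Fin m) ℝ,
        (∀ k : Fin l, (X k)ᵀ = X (-k)) ∧ (∀ i : Fin r, tdot (A i) X = b i) ∧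
          (bcirc X).PosSemidef ∧ v = tdot C X} :=
      ⟨symP X, symP_symm X, fun i => by rw [← hMapp]; exact congrFun hfeas i,
        hpd.posSemidef, rfl⟩
    have h1 := hpstar.1 hmem
    rw [← htC] at h1
    have h2 : tC X < v := hlt
    have h3 : v ≤ pstar := hle
    linarith
  obtain ⟨f, u₀, hΩf, hDf⟩ := geometric_hahn_banach_open hΩconv hΩopen hDconv hdisj
  obtain ⟨y₀, hy₀def⟩ : ∃ x : ℝ, x = f (0, 1) := ⟨_, rfl⟩
  have hsplit : ∀ (X : W m l) (t : ℝ), f (X, t) = f (X, 0) + t * y₀ := by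
    intro X t
    have he : ((X, t) : (W m l) × ℝ) = (X, (0:ℝ)) + t • ((0 : W m l), (1:ℝ)) := by
      simp [Prod.ext_iff]
    rw [hy₀def, he, map_add, _root_.map_smul, smul_eq_mul]
  have hXhatD : ((Xhat, pstar) : (W m l) × ℝ) ∈ D := by
    refine ⟨funext fun i => ?_, le_rfl⟩
    rw [hMapp Xhat i, hXhatP]
    exact hXhatfeas i
  have hy₀neg : y₀ < 0 := by
    by_contra hc
    push_neg at hc
    set t := max (tdot C Xhat + 1) pstar with ht
    have hΩmem : ((Xhat, t) : (W m l) × ℝ) ∈ Ω := by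
      refine ⟨by rw [hXhatP]; exact hXhatpd, ?_⟩
      show tC Xhat < t
      rw [htC, hXhatP]
      have := le_max_left (tdot C Xhat + 1) pstar
      linarith
    have h1 := hΩf _ hΩmem
    have h2 := hDf _ hXhatD
    rw [hsplit] at h1
    rw [hsplit] at h2
    have h3 : pstar ≤ t := le_max_right _ _
    have h4 : pstar * y₀ ≤ t * y₀ := mul_le_mul_of_nonneg_right h3 hc
    linarith
  obtain ⟨s, hsdef⟩ : ∃ x : ℝ, x = -y₀ := ⟨_, rfl⟩
  have hs : 0 < s := by rw [hsdef]; exact neg_pos.mpr hy₀neg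
  have hy₀s : y₀ = -s := by rw [hsdef, neg_neg]
  obtain ⟨g0, hg0def⟩ : ∃ g : W m l →ₗ[ℝ] ℝ,
      g = (f.toLinearMap).comp (LinearMap.inl ℝ (W m l) ℝ) := ⟨_, rfl⟩
  have hg0 : ∀ X : W m l, g0 X = f (X, 0) := by
    intro X; rw [hg0def]; rfl
  -- consequence of separation on the Ω side, for strictly feasible points
  have hcone1 : ∀ X : W m l, (bcirc (symP X)).PosDef → g0 X - s * tC X ≤ u₀ := by
    intro X hpd
    apply le_of_forall_pos_add
    intro δ hδ
    have hds : 0 < δ / s := div_pos hδ hs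
    have hmem : ((X, tC X + δ / s) : (W m l) × ℝ) ∈ Ω := ⟨hpd, by linarith⟩
    have h1 := hΩf _ hmem
    rw [hsplit, hy₀s] at h1
    have hδs : (δ / s) * s = δ := div_mul_cancel₀ δ hs.ne'
    have hexp : (tC X + δ / s) * -s = -(s * tC X) - δ := by
      rw [mul_neg, add_mul, hδs]; ring
    rw [hg0]
    linarith
  -- consequence of separation on D side
  have hD' : ∀ X : W m l, M X = b → u₀ + s * pstar ≤ g0 X := by
    intro X hX
    have h1 := hDf (X, pstar) ⟨hX, le_rfl⟩
    rw [hsplit, hy₀s] at h1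
    rw [hg0]
    have hexp : pstar * -s = -(s * pstar) := by ring
    linarith
  have hker : ∀ Z : W m l, M Z = 0 → g0 Z = 0 := by
    intro Z hZ
    have hcc : ∀ c : ℝ, u₀ + s * pstar ≤ g0 Xhat + c * g0 Z := by
      intro c
      have hfeas : M (Xhat + c • Z) = b := by
        rw [map_add, _root_.map_smul, hZ, hXhatD.1]
        simp
      have h1 := hD' _ hfeas
      rw [map_add, _root_.map_smul, smul_eq_mul] at h1
      linarith
    exact bdd_below_linear hcc
  obtain ⟨y', hy'⟩ := factor_through M g0 hker
  obtain ⟨y, hydef⟩ : ∃ y : Fin r → ℝ, y = fun i => s⁻¹ * y' i := ⟨_, rfl⟩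
  obtain ⟨S, hSdef⟩ : ∃ S : W m l, S = C - ∑ i : Fin r, y i • A i := ⟨_, rfl⟩
  -- S is symmetric
  have hSsymm : ∀ k : Fin l, (S k)ᵀ = S (-k) := by
    intro k
    ext i j
    simp only [hSdef, Matrix.transpose_apply, Pi.sub_apply, Matrix.sub_apply,
      Finset.sum_apply, Matrix.sum_apply, Pi.smul_apply, Matrix.smul_apply, smul_eq_mul]
    have hC : C k j i = C (-k) i j := by rw [← hCsymm k]; rfl
    rw [hC]
    congr 1
    refine Finset.sum_congr rfl fun i' _ => ?_
    have hA : A i' k j i = A i' (-k) i j := by rw [← hAsymm i' k]; rfl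
    rw [hA]
  have htdotS : ∀ X : W m l,
      tdot S X = tdot C X - ∑ i : Fin r, y i * tdot (A i) X := by
    intro X
    rw [hSdef, tdot_sub_left, tdot_sum_left]
    congr 1
    exact Finset.sum_congr rfl fun i _ => tdot_smul_left _ _ _
  -- extension of the Ω-side inequality to the whole feasible cone
  have hcone2 : ∀ X : W m l, (∀ k, (X k)ᵀ = X (-k)) → (bcirc X).PosSemidef →
      g0 X - s * tC X ≤ u₀ := by
    intro X hXs hXpsd
    have hXP : symP X = X := symP_eq_of_symm hXs
    have key : ∀ ε : ℝ, 0 < ε → ε ≤ 1 →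
        (g0 X - s * tC X) + ε * (g0 Xhat - s * tC Xhat) ≤ u₀ := by
      intro ε hε hε1
      have hpd : (bcirc (symP (X + ε • Xhat))).PosDef := by
        rw [hbs, map_add, _root_.map_smul, ← hbs, ← hbs, hXP, hXhatP, add_comm]
        exact posDef_add_posSemidef (posDef_smul hε hXhatpd) hXpsd
      have h1 := hcone1 _ hpd
      rw [map_add, _root_.map_smul, map_add, _root_.map_smul, smul_eq_mul, smul_eq_mul] at h1
      linarith
    exact affine_le key
  -- u₀ is nonnegative
  have h0s : ∀ k : Fin l, (((0 : W m l)) k)ᵀ = (0 : W m l) (-k) := by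
    intro k
    simp
  have h0psd : (bcirc (0 : W m l)).PosSemidef := by
    have hz : bcirc (0 : W m l) = 0 := by
      ext ⟨p, i⟩ ⟨q, j⟩
      simp [bcirc]
    rw [hz]
    exact Matrix.PosSemidef.zero
  have hu₀ : 0 ≤ u₀ := by
    have h1 := hcone2 0 h0s h0psd
    simp only [map_zero] at h1
    linarith
  -- nonnegativity of ⟨S, X⟩ on the cone
  have hSpos : ∀ X : W m l, (∀ k, (X k)ᵀ = X (-k)) → (bcirc X).PosSemidef →
      0 ≤ tdot S X := by
    intro X hXs hXpsd
    have hXP : symP X = X := symP_eq_of_symm hXs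
    -- scaling
    have hscale : ∀ c : ℝ, 0 < c → c * (g0 X - s * tC X) ≤ u₀ := by
      intro c hc
      have hsymc : ∀ k, ((c • X) k)ᵀ = (c • X) (-k) := by
        intro k
        rw [Pi.smul_apply, Matrix.transpose_smul, hXs k, ← Pi.smul_apply]
      have hbc : bcirc (c • X) = c • bcirc X := by
        ext ⟨p, i⟩ ⟨q, j⟩
        simp [bcirc]
      have hpsdc : (bcirc (c • X)).PosSemidef := by
        rw [hbc]
        exact posSemidef_smul hc.le hXpsd
      have h1 := hcone2 (c • X) hsymc hpsdc
      rw [_root_.map_smul, _root_.map_smul, smul_eq_mul, smul_eq_mul] at h1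
      linarith
    have hquant : g0 X - s * tC X ≤ 0 := by
      by_contra hpos
      push_neg at hpos
      have hc : 0 < (u₀ + 1) / (g0 X - s * tC X) := div_pos (by linarith) hpos
      have h1 := hscale _ hc
      rw [div_mul_cancel₀ _ hpos.ne'] at h1
      linarith
    -- identify tdot S X
    have hMX : ∀ i, M X i = tdot (A i) X := fun i => by rw [hMapp, hXP]
    have htCX : tC X = tdot C X := by rw [htC, hXP]
    have hg0X : g0 X = ∑ i : Fin r, tdot (A i) X * y' i := by
      rw [hy']
      exact Finset.sum_congr rfl fun i _ => by rw [hMX i]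
    have hsum : ∑ i : Fin r, y i * tdot (A i) X = s⁻¹ * g0 X := by
      rw [hg0X, Finset.mul_sum]
      exact Finset.sum_congr rfl fun i _ => by rw [congrFun hydef i]; ring
    have hinv : s * (s⁻¹ * g0 X) = g0 X := by
      rw [← mul_assoc, mul_inv_cancel₀ hs.ne', one_mul]
    have heq : s * tdot S X = s * tC X - g0 X := by
      rw [htdotS X, hsum, mul_sub, hinv, htCX]
    by_contra hneg
    push_neg at hneg
    have h2 : s * tdot S X < 0 := mul_neg_of_pos_of_neg hs hneg
    linarith
  have hSpsd : (bcirc S).PosSemidef := dual_cone_psd hSsymm hSpos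
  -- the dual objective value
  have hval_ge : pstar ≤ ∑ i : Fin r, b i * y i := by
    have h1 := hD' Xhat hXhatD.1
    have hg0hat : g0 Xhat = ∑ i : Fin r, b i * y' i := by
      rw [hy']
      exact Finset.sum_congr rfl fun i _ => by rw [congrFun hXhatD.1 i]
    have h2 : ∑ i : Fin r, b i * y i = s⁻¹ * g0 Xhat := by
      rw [hg0hat, Finset.mul_sum]
      exact Finset.sum_congr rfl fun i _ => by rw [congrFun hydef i]; ring
    rw [h2]
    have h3 : s * pstar ≤ g0 Xhat := by linarith
    calc pstar = s⁻¹ * (s * pstar) := by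
          rw [← mul_assoc, inv_mul_cancel₀ hs.ne', one_mul]
      _ ≤ s⁻¹ * g0 Xhat := by
          exact mul_le_mul_of_nonneg_left h3 (inv_nonneg.mpr hs.le)
  have hval_le : ∑ i : Fin r, b i * y i ≤ pstar := by
    apply hpstar.2
    rintro v ⟨X, hXs, hXfeas, hXpsd, rfl⟩
    have h1 : ∑ i : Fin r, y i * tdot (A i) X = ∑ i : Fin r, y i * b i :=
      Finset.sum_congr rfl fun i _ => by rw [hXfeas i]
    have h2 := hSpos X hXs hXpsd
    rw [htdotS X, h1] at h2
    have h3 : ∑ i : Fin r, b i * y i = ∑ i : Fin r, y i * b i :=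
      Finset.sum_congr rfl fun i _ => mul_comm _ _
    rw [h3]
    linarith
  refine ⟨y, S, hSsymm, ?_, hSpsd, le_antisymm hval_le hval_ge⟩
  rw [hSdef]
  abel
end Aux
end

section
/- T-decomposition of T-positive semidefinite tensors: let Z : Fin l → Matrix (Fin m) (Fin m) ℝ be a symmetric tensor. Then bcirc(Z) is positive semidefinite if and only if there exist finitely many tensors u¹, …, uᵗ : Fin l → Matrix (Fin m) (Fin 1) ℝ such that bcirc(Z) = Σ_{i=1}^{t} bcirc(uⁱ) · (bcirc(uⁱ))ᵀ (equivalently, Z = Σ_{i=1}^{t} uⁱ * (uⁱ)ᵀ as tensors). -/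
open Matrix

section PsdSqrtPort
open scoped MatrixOrder

noncomputable def psdSqrt {n : Type*} [Fintype n] [DecidableEq n] (M : Matrix n n ℝ) :
    Matrix n n ℝ := CFC.sqrt M

lemma psdSqrt_posSemidef {n : Type*} [Fintype n] [DecidableEq n] (M : Matrix n n ℝ) :
    (psdSqrt M).PosSemidef := (CFC.sqrt_nonneg M).posSemidef

lemma psdSqrt_mul_self {n : Type*} [Fintype n] [DecidableEq n] {M : Matrix n n ℝ}
    (hM : M.PosSemidef) : psdSqrt M * psdSqrt M = M := CFC.sqrt_mul_sqrt_self M hM.nonneg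

lemma eq_psdSqrt_of_sq_eq {n : Type*} [Fintype n] [DecidableEq n] {A M : Matrix n n ℝ}
    (hA : A.PosSemidef) (hM : M.PosSemidef) (h : A ^ 2 = M) : A = psdSqrt M := by
  rw [psdSqrt, eq_comm, CFC.sqrt_eq_iff M A hM.nonneg hA.nonneg, ← sq, h]

end PsdSqrtPort

/-- T-decomposition of T-PSD tensors: a symmetric tensor `Z` has `bcirc(Z)`
positive semidefinite iff `bcirc(Z) = Σ_i bcirc(uⁱ) · (bcirc(uⁱ))ᵀ` for finitely many
tensors `uⁱ ∈ ℝ^{m×1×l}`. -/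
theorem tpsd_iff_tdecomposition
    (m l : ℕ) (Z : Fin l → Matrix (Fin m) (Fin m) ℝ)
    (hZsymm : ∀ k : Fin l, (Z k)ᵀ = Z (-k)) :
    (bcirc Z).PosSemidef ↔
      ∃ (t : ℕ) (u : Fin t → Fin l → Matrix (Fin m) (Fin 1) ℝ),
        bcirc Z = ∑ i : Fin t, bcirc (u i) * (bcirc (u i))ᵀ := by
  rcases Nat.eq_zero_or_pos l with hl | hl
  · subst hl
    have h0 : bcirc Z = 0 := by ext ⟨p, _⟩; exact p.elim0
    constructor
    · intro _
      exact ⟨0, Fin.elim0, by simp [h0]⟩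
    · intro _
      rw [h0]; exact Matrix.PosSemidef.zero
  haveI : NeZero l := ⟨hl.ne'⟩
  constructor
  · intro hM
    set S : Matrix (Fin l × Fin m) (Fin l × Fin m) ℝ := psdSqrt (bcirc Z) with hSdef
    have hSps : S.PosSemidef := psdSqrt_posSemidef _
    have hSsq : S * S = bcirc Z := psdSqrt_mul_self hM
    -- shift equivariance of S
    have hshift : ∀ c : Fin l, ∀ p q : Fin l, ∀ i j : Fin m,
        S (p + c, i) (q + c, j) = S (p, i) (q, j) := by
      intro c p q i j
      let σ : (Fin l × Fin m) ≃ (Fin l × Fin m) :=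
        (Equiv.addRight c).prodCongr (Equiv.refl (Fin m))
      have hσ : ∀ a : Fin l × Fin m, σ a = (a.1 + c, a.2) := fun a => rfl
      have hMs : (bcirc Z).submatrix σ σ = bcirc Z := by
        ext a b
        simp [bcirc, hσ, add_sub_add_right_eq_sub]
      have hS' : (S.submatrix σ σ).PosSemidef := hSps.submatrix σ
      have hS'sq : (S.submatrix σ σ) ^ 2 = bcirc Z := by
        rw [pow_two, Matrix.submatrix_mul_equiv, hSsq]
        exact hMs
      have h2 : S.submatrix σ σ = S := by rw [eq_psdSqrt_of_sq_eq hS' hM hS'sq]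
      have := congrFun (congrFun h2 (p, i)) (q, j)
      simpa [hσ] using this
    -- S is block circulant
    set W : Fin l → Matrix (Fin m) (Fin m) ℝ := fun k => Matrix.of fun i j => S (k, i) (0, j)
      with hWdef
    have hSW : S = bcirc W := by
      ext ⟨p, i⟩ ⟨q, j⟩
      have := hshift q (p - q) 0 i j
      simpa [bcirc, W] using this
    refine ⟨m, fun j k => Matrix.of fun i _ => W k i j, ?_⟩
    have hSym : Sᵀ = S := by
      have := hSps.isHermitian
      simpa [Matrix.IsHermitian, Matrix.conjTranspose_eq_transpose_of_trivial] using this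
    rw [← hSsq]
    nth_rewrite 2 [← hSym]
    rw [hSW]
    ext ⟨p, i⟩ ⟨p', i'⟩
    simp only [Matrix.sum_apply, Matrix.mul_apply, Matrix.transpose_apply, bcirc,
      Matrix.of_apply, Fintype.sum_prod_type]
    rw [Finset.sum_comm]
    simp
  · rintro ⟨t, u, hu⟩
    rw [hu]
    have : ∀ i : Fin t, (bcirc (u i) * (bcirc (u i))ᵀ).PosSemidef := by
      intro i
      have := Matrix.posSemidef_self_mul_conjTranspose (bcirc (u i))
      simpa [Matrix.conjTranspose_eq_transpose_of_trivial] using this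
    exact Finset.sum_induction _ _ (fun a b ha hb => ha.add hb)
      (Matrix.PosSemidef.zero) (fun i _ => this i)
end

section
/- Characterization of l-block circulant SOS polynomials (Theorem 3): let v : Fin l × Fin m → MvPolynomial (Fin n) ℝ be a family of polynomials (in the paper, the monomial vector [x]_d with s(d) = m·l) and let q ∈ MvPolynomial (Fin n) ℝ. Then the following are equivalent: (i) there exist finitely many tensors u¹, …, uᵗ : Fin l → Matrix (Fin m) (Fin 1) ℝ such that q = Σ_{i=1}^{t} Σ_{j ∈ Fin l} ( Σ_{(p,a) ∈ Fin l × Fin m} bcirc(uⁱ) (p,a) (j,0) · v (p,a) )²; (ii) there exists a symmetric tensor Z : Fin l → Matrix (Fin m) (Fin m) ℝ with bcirc(Z) positive semidefinite such that q = Σ_{(p,a), (q,b) ∈ Fin l × Fin m} bcirc(Z) (p,a) (q,b) · v (p,a) · v (q,b). -/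
open Matrix

private lemma sos_expand {n : ℕ} {ι κ σ : Type*} [Fintype ι] [Fintype κ] [Fintype σ]
    (B : σ → ι → κ → ℝ) (v : ι → MvPolynomial (Fin n) ℝ) :
    ∑ i : σ, ∑ j : κ, (∑ pa : ι, MvPolynomial.C (B i pa j) * v pa) ^ 2
      = ∑ pa : ι, ∑ qb : ι,
          MvPolynomial.C (∑ i : σ, ∑ j : κ, B i pa j * B i qb j) * v pa * v qb := by
  calc ∑ i : σ, ∑ j : κ, (∑ pa : ι, MvPolynomial.C (B i pa j) * v pa) ^ 2
      = ∑ i : σ, ∑ j : κ, ∑ pa : ι, ∑ qb : ι,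
          MvPolynomial.C (B i pa j * B i qb j) * v pa * v qb := by
        refine Finset.sum_congr rfl fun i _ => Finset.sum_congr rfl fun j _ => ?_
        rw [sq, Finset.sum_mul_sum]
        exact Finset.sum_congr rfl fun pa _ => Finset.sum_congr rfl fun qb _ => by
          rw [MvPolynomial.C_mul]; ring
    _ = ∑ i : σ, ∑ pa : ι, ∑ j : κ, ∑ qb : ι,
          MvPolynomial.C (B i pa j * B i qb j) * v pa * v qb :=
        Finset.sum_congr rfl fun i _ => Finset.sum_comm
    _ = ∑ i : σ, ∑ pa : ι, ∑ qb : ι, ∑ j : κ,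
          MvPolynomial.C (B i pa j * B i qb j) * v pa * v qb :=
        Finset.sum_congr rfl fun i _ => Finset.sum_congr rfl fun pa _ =>
          Finset.sum_comm
    _ = ∑ pa : ι, ∑ i : σ, ∑ qb : ι, ∑ j : κ,
          MvPolynomial.C (B i pa j * B i qb j) * v pa * v qb :=
        Finset.sum_comm
    _ = ∑ pa : ι, ∑ qb : ι, ∑ i : σ, ∑ j : κ,
          MvPolynomial.C (B i pa j * B i qb j) * v pa * v qb :=
        Finset.sum_congr rfl fun pa _ => Finset.sum_comm
    _ = _ := by
        refine Finset.sum_congr rfl fun pa _ => Finset.sum_congr rfl fun qb _ => ?_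
        simp only [map_sum, Finset.sum_mul]

/-- characterization of `l`-block circulant SOS polynomials: `q` is a sum of
squares of the entries of `bcirc(uⁱ)ᵀ · v` over generators `uⁱ` iff `q` is a quadratic
form `vᵀ · bcirc(Z) · v` for some symmetric tensor `Z` with `bcirc(Z)` PSD. -/
theorem block_circulant_sos_characterization
    (n m l : ℕ) (v : Fin l × Fin m → MvPolynomial (Fin n) ℝ)
    (q : MvPolynomial (Fin n) ℝ) :
    (∃ (t : ℕ) (u : Fin t → Fin l → Matrix (Fin m) (Fin 1) ℝ),
        q = ∑ i : Fin t, ∑ j : Fin l,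
          (∑ pa : Fin l × Fin m,
            MvPolynomial.C (bcirc (u i) pa (j, 0)) * v pa) ^ 2) ↔
    (∃ Z : Fin l → Matrix (Fin m) (Fin m) ℝ,
        (∀ k : Fin l, (Z k)ᵀ = Z (-k)) ∧ (bcirc Z).PosSemidef ∧
        q = ∑ pa : Fin l × Fin m, ∑ qb : Fin l × Fin m,
          MvPolynomial.C (bcirc Z pa qb) * v pa * v qb) := by
  rcases Nat.eq_zero_or_pos l with rfl | hl
  · -- trivial case `l = 0`: all index types are empty
    constructor
    · rintro ⟨t, u, rfl⟩
      refine ⟨fun _ => 0, fun k => by simp, ?_, by simp⟩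
      have h0 : bcirc (fun _ : Fin 0 => (0 : Matrix (Fin m) (Fin m) ℝ)) = 0 := by
        ext pa qb
        simp [bcirc]
      rw [h0]
      exact Matrix.PosSemidef.zero
    · rintro ⟨Z, _, _, rfl⟩
      exact ⟨0, Fin.elim0, by simp⟩
  · haveI : NeZero l := ⟨hl.ne'⟩
    constructor
    · -- (i) → (ii)
      rintro ⟨t, u, rfl⟩
      set Z : Fin l → Matrix (Fin m) (Fin m) ℝ := fun k => Matrix.of fun a b =>
        ∑ i : Fin t, ∑ j : Fin l, u i (k + j) a 0 * u i j b 0 with hZ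
      have hbz : ∀ pa qb : Fin l × Fin m, bcirc Z pa qb =
          ∑ i : Fin t, ∑ j : Fin l, bcirc (u i) pa (j, 0) * bcirc (u i) qb (j, 0) := by
        rintro ⟨p, a⟩ ⟨q, b⟩
        show ∑ i : Fin t, ∑ j : Fin l, u i (p - q + j) a 0 * u i j b 0
          = ∑ i : Fin t, ∑ j : Fin l, u i (p - j) a 0 * u i (q - j) b 0
        refine Finset.sum_congr rfl fun i _ => ?_
        refine Fintype.sum_equiv (Equiv.subLeft q) _ _ fun j => ?_
        have h1 : p - (q - j) = p - q + j := by abel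
        have h2 : q - (q - j) = j := by abel
        simp only [Equiv.subLeft_apply, h1, h2]
      refine ⟨Z, ?_, ?_, ?_⟩
      · intro k
        ext a b
        show ∑ i : Fin t, ∑ j : Fin l, u i (k + j) b 0 * u i j a 0
          = ∑ i : Fin t, ∑ j : Fin l, u i (-k + j) a 0 * u i j b 0
        refine Finset.sum_congr rfl fun i _ => ?_
        refine Fintype.sum_equiv (Equiv.addLeft k) _ _ fun j => ?_
        have h1 : -k + (k + j) = j := by abel
        simp only [Equiv.coe_addLeft, h1]
        ring
      · have hsum : bcirc Z = ∑ i : Fin t, bcirc (u i) * (bcirc (u i))ᵀ := by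
          ext pa qb
          rw [hbz pa qb]
          simp [Matrix.sum_apply, Matrix.mul_apply, Fintype.sum_prod_type]
        rw [hsum]
        refine Finset.sum_induction _ _ (fun a b ha hb => ha.add hb) .zero fun i _ => ?_
        have h := Matrix.posSemidef_self_mul_conjTranspose (bcirc (u i))
        rwa [Matrix.conjTranspose_eq_transpose_of_trivial] at h
      · rw [sos_expand (fun i pa j => bcirc (u i) pa (j, 0)) v]
        exact Finset.sum_congr rfl fun pa _ => Finset.sum_congr rfl fun qb _ => by
          rw [hbz pa qb]
    · -- (ii) → (i)
      rintro ⟨Z, _, hpsd, rfl⟩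
      obtain ⟨B, hB⟩ : ∃ B : Matrix (Fin l × Fin m) (Fin l × Fin m) ℝ, bcirc Z = Bᴴ * B := by
        open scoped MatrixOrder in
        exact ⟨CFC.sqrt (bcirc Z), by
          rw [(CFC.sqrt_nonneg (bcirc Z)).posSemidef.isHermitian.eq,
            CFC.sqrt_mul_sqrt_self (bcirc Z) hpsd.nonneg]⟩
      set u : ((Fin l × Fin m) × Fin l) → Fin l → Matrix (Fin m) (Fin 1) ℝ :=
        fun cs k => Matrix.of fun a _ => B cs.1 (k + cs.2, a) / l with hu
      set t := Fintype.card ((Fin l × Fin m) × Fin l) with ht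
      set e : Fin t ≃ (Fin l × Fin m) × Fin l := (Fintype.equivFin _).symm with he
      refine ⟨t, fun i => u (e i), ?_⟩
      have hre : ∑ i : Fin t, ∑ j : Fin l,
            (∑ pa : Fin l × Fin m,
              MvPolynomial.C (bcirc (u (e i)) pa (j, 0)) * v pa) ^ 2
          = ∑ cs : (Fin l × Fin m) × Fin l, ∑ j : Fin l,
            (∑ pa : Fin l × Fin m,
              MvPolynomial.C (bcirc (u cs) pa (j, 0)) * v pa) ^ 2 :=
        Fintype.sum_equiv e _ _ fun i => rfl
      rw [hre, sos_expand (fun cs pa j => bcirc (u cs) pa (j, 0)) v]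
      refine Finset.sum_congr rfl fun pa _ => Finset.sum_congr rfl fun qb _ => ?_
      obtain ⟨p, a⟩ := pa
      obtain ⟨q, b⟩ := qb
      refine congrArg (fun x => MvPolynomial.C x * v (p, a) * v (q, b)) ?_
      have hM : ∀ r : Fin l,
          ∑ c : Fin l × Fin m, B c (p + r, a) * B c (q + r, b) = Z (p - q) a b := by
        intro r
        have h1 : bcirc Z (p + r, a) (q + r, b)
            = ∑ c : Fin l × Fin m, B c (p + r, a) * B c (q + r, b) := by
          rw [hB]
          simp [Matrix.mul_apply, Matrix.conjTranspose_apply]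
        rw [← h1]
        show Z (p + r - (q + r)) a b = Z (p - q) a b
        congr 1
        abel
      show Z (p - q) a b = ∑ cs : (Fin l × Fin m) × Fin l, ∑ j : Fin l,
          (B cs.1 (p - j + cs.2, a) / l) * (B cs.1 (q - j + cs.2, b) / l)
      rw [Fintype.sum_prod_type]
      symm
      calc ∑ c : Fin l × Fin m, ∑ s : Fin l, ∑ j : Fin l,
            (B c (p - j + s, a) / l) * (B c (q - j + s, b) / l)
          = ∑ c : Fin l × Fin m, ∑ j : Fin l, ∑ s : Fin l,
            (B c (p - j + s, a) / l) * (B c (q - j + s, b) / l) :=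
            Finset.sum_congr rfl fun c _ => Finset.sum_comm
        _ = ∑ c : Fin l × Fin m, ∑ j : Fin l, ∑ r : Fin l,
            (B c (p + r, a) / l) * (B c (q + r, b) / l) := by
            refine Finset.sum_congr rfl fun c _ => Finset.sum_congr rfl fun j _ => ?_
            refine Fintype.sum_equiv (Equiv.subRight j) _ _ fun s => ?_
            have h1 : p + (s - j) = p - j + s := by abel
            have h2 : q + (s - j) = q - j + s := by abel
            simp only [Equiv.subRight_apply, h1, h2]
        _ = ∑ j : Fin l, ∑ c : Fin l × Fin m, ∑ r : Fin l,
            (B c (p + r, a) / l) * (B c (q + r, b) / l) := Finset.sum_comm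
        _ = ∑ j : Fin l, ∑ r : Fin l, ∑ c : Fin l × Fin m,
            (B c (p + r, a) / l) * (B c (q + r, b) / l) :=
            Finset.sum_congr rfl fun _ _ => Finset.sum_comm
        _ = ∑ j : Fin l, ∑ r : Fin l, Z (p - q) a b / (l * l) := by
            refine Finset.sum_congr rfl fun j _ => Finset.sum_congr rfl fun r _ => ?_
            rw [← hM r, Finset.sum_div]
            exact Finset.sum_congr rfl fun c _ => by ring
        _ = Z (p - q) a b := by
            simp only [Finset.sum_const, Finset.card_univ, Fintype.card_fin, nsmul_eq_mul]
            have hl' : (l : ℝ) ≠ 0 := Nat.cast_ne_zero.mpr hl.ne'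
            field_simp
end

section
/- For every tensor Z : Fin l → Matrix (Fin m) (Fin m) ℝ and every tensor X : Fin l → Matrix (Fin m) (Fin 1) ℝ, with u := unfold(X) ∈ ℝ^{ml}, the tensor inner product satisfies ⟨Z, X * Xᵀ⟩ = uᵀ · bcirc(Z) · u. Moreover bcirc(X * Xᵀ) = bcirc(X) · (bcirc(X))ᵀ; in particular X * Xᵀ is a symmetric tensor and bcirc(X * Xᵀ) is positive semidefinite, i.e. X * Xᵀ is T-positive semidefinite. -/
open Matrix

/-- The transpose of a third-order tensor: `(Aᵀ)⁽ᵏ⁾ = (A⁽⁻ᵏ⁾)ᵀ`. -/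
def tTranspose {m n l : ℕ} (A : Fin l → Matrix (Fin m) (Fin n) ℝ) :
    Fin l → Matrix (Fin n) (Fin m) ℝ :=
  fun k => (A (-k))ᵀ

lemma tMul_self_apply {m l : ℕ} (X : Fin l → Matrix (Fin m) (Fin 1) ℝ)
    (k : Fin l) (i j : Fin m) :
    tMul X (tTranspose X) k i j = ∑ q : Fin l, X (k - q) i 0 * X (-q) j 0 := by
  simp [tMul, foldT, bcirc, unfoldT, tTranspose, Matrix.mul_apply, Fintype.sum_prod_type]

lemma bcirc_tMul_self {m l : ℕ} (X : Fin l → Matrix (Fin m) (Fin 1) ℝ) :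
    bcirc (tMul X (tTranspose X)) = bcirc X * (bcirc X)ᵀ := by
  ext ⟨p, i⟩ ⟨q, j⟩
  haveI : NeZero l := ⟨(Fin.pos p).ne'⟩
  simp only [bcirc, Matrix.of_apply, tMul_self_apply, Matrix.mul_apply,
    Fintype.sum_prod_type, Matrix.transpose_apply, Fin.sum_univ_one]
  refine Fintype.sum_equiv (Equiv.addRight q) _ _ fun r => ?_
  simp only [Equiv.coe_addRight]
  congr 1 <;> congr 1 <;> abel

lemma sym_psd
    (m l : ℕ) (Z : Fin l → Matrix (Fin m) (Fin m) ℝ)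
    (X : Fin l → Matrix (Fin m) (Fin 1) ℝ) :
    (∀ k : Fin l, ((tMul X (tTranspose X)) k)ᵀ = (tMul X (tTranspose X)) (-k)) ∧
    (bcirc (tMul X (tTranspose X))).PosSemidef := by
  have hb := bcirc_tMul_self X
  have hsym : (bcirc (tMul X (tTranspose X)))ᵀ = bcirc (tMul X (tTranspose X)) := by
    rw [hb]; ext p q; simp [Matrix.mul_apply, Matrix.transpose_apply, mul_comm]
  constructor
  · intro k
    haveI : NeZero l := ⟨(Fin.pos k).ne'⟩
    ext i j
    have := congrFun (congrFun hsym (0, i)) (k, j)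
    simpa [bcirc, Matrix.transpose_apply] using this
  · rw [hb]
    have h : (bcirc X)ᵀ = (bcirc X)ᴴ := by ext p q; simp [Matrix.conjTranspose_apply]
    rw [h]
    exact Matrix.posSemidef_self_mul_conjTranspose _

lemma sum_shift {l : ℕ} (f : Fin l → Fin l → ℝ) :
    ∑ k : Fin l, ∑ q : Fin l, f k q = ∑ p : Fin l, ∑ q : Fin l, f (p - q) (-q) := by
  rcases Nat.eq_zero_or_pos l with hl | hl
  · subst hl; simp
  haveI : NeZero l := ⟨hl.ne'⟩
  rw [← Fintype.sum_prod_type (f := fun pq : Fin l × Fin l => f pq.1 pq.2),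
    ← Fintype.sum_prod_type (f := fun pq : Fin l × Fin l => f (pq.1 - pq.2) (-pq.2))]
  exact Fintype.sum_equiv
    ⟨fun pq => (pq.1 - pq.2, -pq.2), fun pq => (pq.1 - pq.2, -pq.2),
      fun pq => by simp [sub_neg_eq_add, sub_add_cancel],
      fun pq => by simp [sub_neg_eq_add, sub_add_cancel]⟩ _ _ (fun pq => rfl) |>.symm

lemma part1 (m l : ℕ) (Z : Fin l → Matrix (Fin m) (Fin m) ℝ)
    (X : Fin l → Matrix (Fin m) (Fin 1) ℝ) :
    tdot Z (tMul X (tTranspose X)) =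
      (fun ki : Fin l × Fin m => unfoldT X ki 0) ⬝ᵥ
        (bcirc Z).mulVec (fun ki : Fin l × Fin m => unfoldT X ki 0) := by
  simp only [tdot, tMul_self_apply, dotProduct, Matrix.mulVec, dotProduct, bcirc, unfoldT,
    Matrix.of_apply, Fintype.sum_prod_type, Finset.mul_sum, Finset.sum_mul]
  rw [show (∑ k : Fin l, ∑ i : Fin m, ∑ j : Fin m, ∑ q : Fin l,
        Z k i j * (X (k - q) i 0 * X (-q) j 0)) =
      ∑ k : Fin l, ∑ q : Fin l, ∑ i : Fin m, ∑ j : Fin m,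
        X (k - q) i 0 * Z ((k - q) - (-q)) i j * X (-q) j 0 by
    rcases Nat.eq_zero_or_pos l with hl | hl
    · subst hl; simp
    haveI : NeZero l := ⟨hl.ne'⟩
    refine Finset.sum_congr rfl fun k _ => ?_
    rw [show (∑ i : Fin m, ∑ j : Fin m, ∑ q : Fin l,
          Z k i j * (X (k - q) i 0 * X (-q) j 0)) =
        ∑ q : Fin l, ∑ i : Fin m, ∑ j : Fin m,
          Z k i j * (X (k - q) i 0 * X (-q) j 0) from
      (Finset.sum_congr rfl fun i _ => Finset.sum_comm).trans
        (Finset.sum_comm)]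
    refine Finset.sum_congr rfl fun q _ => Finset.sum_congr rfl fun i _ =>
      Finset.sum_congr rfl fun j _ => ?_
    rw [show (k - q) - (-q) = k by rw [sub_neg_eq_add, sub_add_cancel]]
    ring]
  rw [← sum_shift (fun p q => ∑ i : Fin m, ∑ j : Fin m, X p i 0 * Z (p - q) i j * X q j 0)]
  refine Finset.sum_congr rfl fun p _ => ?_
  rw [Finset.sum_comm]
  refine Finset.sum_congr rfl fun i _ => Finset.sum_congr rfl fun q _ =>
    Finset.sum_congr rfl fun j _ => by ring


/-- `⟨Z, X * Xᵀ⟩ = uᵀ · bcirc(Z) · u` with `u = unfold(X)`, and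
`bcirc(X * Xᵀ) = bcirc(X) · bcirc(X)ᵀ`; in particular `X * Xᵀ` is symmetric and
T-positive semidefinite. -/
theorem tdot_tMul_self_eq_quadratic_form
    (m l : ℕ) (Z : Fin l → Matrix (Fin m) (Fin m) ℝ)
    (X : Fin l → Matrix (Fin m) (Fin 1) ℝ) :
    (tdot Z (tMul X (tTranspose X)) =
        (fun ki : Fin l × Fin m => unfoldT X ki 0) ⬝ᵥ
          (bcirc Z).mulVec (fun ki : Fin l × Fin m => unfoldT X ki 0)) ∧
    bcirc (tMul X (tTranspose X)) = bcirc X * (bcirc X)ᵀ ∧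
    (∀ k : Fin l, ((tMul X (tTranspose X)) k)ᵀ = (tMul X (tTranspose X)) (-k)) ∧
    (bcirc (tMul X (tTranspose X))).PosSemidef :=
  ⟨part1 m l Z X, bcirc_tMul_self X, (sym_psd m l Z X).1, (sym_psd m l Z X).2⟩
end

section
/- Every value feasible for the block circulant SOS relaxation is feasible for the standard SOS relaxation: let f, g_1, …, g_r : (Fin n → ℝ) → ℝ, γ ∈ ℝ, and V_0 : (Fin n → ℝ) → (Fin l_0 × Fin m_0 → ℝ), V_i : (Fin n → ℝ) → (Fin l_i × Fin m_i → ℝ). If there exist symmetric tensors Z_0 ∈ ℝ^{m_0×m_0×l_0}, Z_i ∈ ℝ^{m_i×m_i×l_i} with bcirc(Z_0) and each bcirc(Z_i) positive semidefinite such that for all x, f(x) − γ = ⟨Z_0, fold(V_0 x) * fold(V_0 x)ᵀ⟩ + Σ_{i=1}^{r} g_i(x) · ⟨Z_i, fold(V_i x) * fold(V_i x)ᵀ⟩, then there exist real symmetric positive semidefinite matrices M_0 of size (m_0·l_0) and M_i of size (m_i·l_i) such that for all x, f(x) − γ = (V_0 x)ᵀ · M_0 · (V_0 x) + Σ_{i=1}^{r}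 g_i(x) · (V_i x)ᵀ · M_i · (V_i x). -/
open Matrix

/-- `fold` of a vector `v ∈ ℝ^{ml}` regarded as an `ml × 1` matrix. -/
def foldVec {m l : ℕ} (v : Fin l × Fin m → ℝ) : Fin l → Matrix (Fin m) (Fin 1) ℝ :=
  fun k => Matrix.of fun i _ => v (k, i)

lemma swapSum {l : ℕ} [NeZero l] (F : Fin l → Fin l → ℝ) :
    ∑ k : Fin l, ∑ q : Fin l, F (k - q) (-q) = ∑ k : Fin l, ∑ q : Fin l, F k q := by
  rw [← Fintype.sum_prod_type', ← Fintype.sum_prod_type']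
  have hbij : Function.Bijective (fun p : Fin l × Fin l => (p.1 - p.2, -p.2)) := by
    apply Function.Involutive.bijective
    intro p
    simp only [Prod.mk.injEq, sub_neg_eq_add, sub_add_cancel, neg_neg]
  exact Fintype.sum_bijective _ hbij _ _ (fun p => rfl)

lemma tdot_eq_quadform {m l : ℕ} (Z : Fin l → Matrix (Fin m) (Fin m) ℝ)
    (v : Fin l × Fin m → ℝ) :
    tdot Z (tMul (foldVec v) (tTranspose (foldVec v))) = v ⬝ᵥ (bcirc Z).mulVec v := by
  rcases Nat.eq_zero_or_pos l with rfl | hl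
  · simp [tdot, dotProduct]
  haveI : NeZero l := ⟨hl.ne'⟩
  simp only [tdot, tMul, foldT, bcirc, unfoldT, tTranspose, foldVec, dotProduct,
    Matrix.mulVec, Matrix.mul_apply, Matrix.of_apply, Matrix.transpose_apply,
    Fintype.sum_prod_type, Fin.sum_univ_one, Finset.mul_sum, Finset.sum_mul]
  calc
    ∑ k : Fin l, ∑ i : Fin m, ∑ j : Fin m, ∑ q : Fin l,
        Z k i j * (v (k - q, i) * v (-q, j))
      = ∑ k : Fin l, ∑ q : Fin l, ∑ i : Fin m, ∑ j : Fin m,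
          Z k i j * (v (k - q, i) * v (-q, j)) := by
        refine Finset.sum_congr rfl fun k _ => ?_
        rw [show (∑ i : Fin m, ∑ j : Fin m, ∑ q : Fin l,
              Z k i j * (v (k - q, i) * v (-q, j)))
            = ∑ i : Fin m, ∑ q : Fin l, ∑ j : Fin m,
              Z k i j * (v (k - q, i) * v (-q, j)) from
          Finset.sum_congr rfl fun i _ => Finset.sum_comm]
        exact Finset.sum_comm
    _ = ∑ k : Fin l, ∑ q : Fin l, ∑ i : Fin m, ∑ j : Fin m,
          v (k - q, i) * (Z (k - q - -q) i j * v (-q, j)) := by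
        refine Finset.sum_congr rfl fun k _ => Finset.sum_congr rfl fun q _ =>
          Finset.sum_congr rfl fun i _ => Finset.sum_congr rfl fun j _ => ?_
        rw [show k - q - -q = k by rw [sub_neg_eq_add, sub_add_cancel]]; ring
    _ = ∑ p : Fin l, ∑ q : Fin l, ∑ i : Fin m, ∑ j : Fin m,
          v (p, i) * (Z (p - q) i j * v (q, j)) :=
        swapSum (fun p q => ∑ i : Fin m, ∑ j : Fin m, v (p, i) * (Z (p - q) i j * v (q, j)))
    _ = ∑ p : Fin l, ∑ i : Fin m, ∑ q : Fin l, ∑ j : Fin m,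
          v (p, i) * (Z (p - q) i j * v (q, j)) :=
        Finset.sum_congr rfl fun p _ => Finset.sum_comm

/-- a value feasible for the block circulant SOS relaxation is feasible for
the standard SOS relaxation: tensor certificates yield positive semidefinite matrix
certificates. -/
theorem block_circulant_feasible_implies_sos_feasible
    (n r : ℕ) (f : (Fin n → ℝ) → ℝ) (g : Fin r → (Fin n → ℝ) → ℝ) (γ : ℝ)
    (l0 m0 : ℕ) (li mi : Fin r → ℕ)
    (V0 : (Fin n → ℝ) → (Fin l0 × Fin m0 → ℝ))
    (V : ∀ i : Fin r, (Fin n → ℝ) → (Fin (li i) × Fin (mi i) → ℝ))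
    (h : ∃ (Z0 : Fin l0 → Matrix (Fin m0) (Fin m0) ℝ)
        (Z : ∀ i : Fin r, Fin (li i) → Matrix (Fin (mi i)) (Fin (mi i)) ℝ),
        (∀ k : Fin l0, (Z0 k)ᵀ = Z0 (-k)) ∧
        (∀ (i : Fin r) (k : Fin (li i)), (Z i k)ᵀ = Z i (-k)) ∧
        (bcirc Z0).PosSemidef ∧
        (∀ i : Fin r, (bcirc (Z i)).PosSemidef) ∧
        ∀ x : Fin n → ℝ,
          f x - γ = tdot Z0 (tMul (foldVec (V0 x)) (tTranspose (foldVec (V0 x)))) +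
            ∑ i : Fin r,
              g i x * tdot (Z i) (tMul (foldVec (V i x)) (tTranspose (foldVec (V i x))))) :
    ∃ (M0 : Matrix (Fin l0 × Fin m0) (Fin l0 × Fin m0) ℝ)
      (M : ∀ i : Fin r, Matrix (Fin (li i) × Fin (mi i)) (Fin (li i) × Fin (mi i)) ℝ),
      M0.PosSemidef ∧ (∀ i : Fin r, (M i).PosSemidef) ∧
      ∀ x : Fin n → ℝ,
        f x - γ = V0 x ⬝ᵥ M0.mulVec (V0 x) +
          ∑ i : Fin r, g i x * (V i x ⬝ᵥ (M i).mulVec (V i x)) := by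
  obtain ⟨Z0, Z, -, -, hpsd0, hpsd, hx⟩ := h
  refine ⟨bcirc Z0, fun i => bcirc (Z i), hpsd0, hpsd, fun x => ?_⟩
  rw [hx x, tdot_eq_quadform]
  congr 1
  exact Finset.sum_congr rfl fun i _ => by rw [tdot_eq_quadform]
end

section
/- A principal subtensor of a T-positive semidefinite tensor is T-positive semidefinite: let A : Fin l → Matrix (Fin m') (Fin m') ℝ be a symmetric tensor with bcirc(A) positive semidefinite, and let e : Fin m → Fin m' be injective. Define B : Fin l → Matrix (Fin m) (Fin m) ℝ by B⁽ᵏ⁾ = (A⁽ᵏ⁾).submatrix e e (restriction of every slice to the rows and columns selected by e). Then B is a symmetric tensor and bcirc(B) is positive semidefinite. -/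
open Matrix

/-- a principal subtensor of a T-positive semidefinite tensor is
T-positive semidefinite. -/
theorem principal_subtensor_tpsd
    (m m' l : ℕ) (A : Fin l → Matrix (Fin m') (Fin m') ℝ)
    (hsymm : ∀ k : Fin l, (A k)ᵀ = A (-k))
    (hpsd : (bcirc A).PosSemidef)
    (e : Fin m → Fin m') (he : Function.Injective e) :
    (∀ k : Fin l, ((fun k' => (A k').submatrix e e) k)ᵀ =
        (fun k' => (A k').submatrix e e) (-k)) ∧
    (bcirc (fun k' => (A k').submatrix e e)).PosSemidef := by
  constructor
  · intro k
    ext i j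
    have := congrFun (congrFun (hsymm k) (e i)) (e j)
    simpa using this
  · have heq : bcirc (fun k' => (A k').submatrix e e)
        = (bcirc A).submatrix (Prod.map id e) (Prod.map id e) := by
      ext p q
      rfl
    rw [heq]
    exact hpsd.submatrix _
end

section
/- Reduction of the complex SDP by conjugate symmetry (even case): let l be an even positive integer and C, X : Fin l → Matrix (Fin m) (Fin m) ℂ be families of Hermitian matrices satisfying C_k = conj(C_{l−k}) and X_k = conj(X_{l−k}) for every k ∈ Fin l (indices mod l, conj entrywise). Then each inner product ⟨C_k, X_k⟩ := trace(C_k^H · X_k) is a real number, and Σ_{k=0}^{l−1} ⟨C_k, X_k⟩ = ⟨C_0, X_0⟩ + ⟨C_{l/2}, X_{l/2}⟩ + 2 · Σ_{k=1}^{l/2−1} ⟨C_k, X_k⟩. -/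
open Matrix

/-- reduction of the complex SDP by conjugate symmetry (even case): if the
Hermitian families `C`, `X` satisfy `C_k = conj(C_{l−k})` and `X_k = conj(X_{l−k})`, then
each `⟨C_k, X_k⟩ = trace(C_kᴴ X_k)` is real and
`Σ_k ⟨C_k, X_k⟩ = ⟨C_0, X_0⟩ + ⟨C_{l/2}, X_{l/2}⟩ + 2 Σ_{0<k<l/2} ⟨C_k, X_k⟩`. -/
theorem complex_sdp_conjugate_symmetry_reduction_even
    (m l : ℕ) (hl : 0 < l) (hev : 2 ∣ l)
    (C X : Fin l → Matrix (Fin m) (Fin m) ℂ)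
    (hCherm : ∀ k : Fin l, (C k).IsHermitian)
    (hXherm : ∀ k : Fin l, (X k).IsHermitian)
    (hCconj : ∀ k : Fin l, C k = (C (-k)).map (starRingEnd ℂ))
    (hXconj : ∀ k : Fin l, X k = (X (-k)).map (starRingEnd ℂ)) :
    (∀ k : Fin l, (Matrix.trace ((C k)ᴴ * X k)).im = 0) ∧
    ∑ k : Fin l, Matrix.trace ((C k)ᴴ * X k) =
      Matrix.trace ((C ⟨0, hl⟩)ᴴ * X ⟨0, hl⟩) +
        Matrix.trace ((C ⟨l / 2, Nat.div_lt_self hl one_lt_two⟩)ᴴ *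
          X ⟨l / 2, Nat.div_lt_self hl one_lt_two⟩) +
        2 * ∑ k ∈ Finset.univ.filter (fun k : Fin l => 0 < (k : ℕ) ∧ (k : ℕ) < l / 2),
              Matrix.trace ((C k)ᴴ * X k) := by
  have h2 : l / 2 < l := Nat.div_lt_self hl one_lt_two
  set f : Fin l → ℂ := fun k => Matrix.trace ((C k)ᴴ * X k) with hf
  -- each value is fixed by conjugation
  have hstar : ∀ k, (starRingEnd ℂ) (f k) = f k := by
    intro k
    simp only [hf]
    calc (starRingEnd ℂ) (Matrix.trace ((C k)ᴴ * X k))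
        = Matrix.trace (((C k)ᴴ * X k)ᴴ) := (Matrix.trace_conjTranspose _).symm
      _ = Matrix.trace ((X k)ᴴ * (C k)ᴴᴴ) := by rw [conjTranspose_mul]
      _ = Matrix.trace ((C k)ᴴ * X k) := by
          rw [conjTranspose_conjTranspose, (hXherm k).eq, (hCherm k).eq]
          exact Matrix.trace_mul_comm _ _
  have hreal : ∀ k, (f k).im = 0 := fun k => Complex.conj_eq_iff_im.mp (hstar k)
  -- symmetry under negation
  have hneg : ∀ k : Fin l, f (-k) = f k := by
    intro k
    have : f k = (starRingEnd ℂ) (f (-k)) := by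
      simp only [hf]
      conv_lhs => rw [hCconj k, hXconj k]
      rw [show ((C (-k)).map (starRingEnd ℂ))ᴴ * ((X (-k)).map (starRingEnd ℂ))
            = ((C (-k))ᴴ * X (-k)).map (starRingEnd ℂ) by
        rw [Matrix.map_mul]
        congr 1]
      simp [Matrix.trace, Matrix.diag, Matrix.map_apply, map_sum]
    rw [this, hstar]
  refine ⟨hreal, ?_⟩
  show ∑ k : Fin l, f k = f ⟨0, hl⟩ + f ⟨l / 2, h2⟩ +
    2 * ∑ k ∈ Finset.univ.filter (fun k : Fin l => 0 < (k : ℕ) ∧ (k : ℕ) < l / 2), f k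
  obtain ⟨c, hc⟩ := hev
  have hhalf : l / 2 + l / 2 = l := by omega
  set a : Fin l := ⟨0, hl⟩ with ha
  set b : Fin l := ⟨l / 2, h2⟩ with hb
  set A := Finset.univ.filter (fun k : Fin l => 0 < (k : ℕ) ∧ (k : ℕ) < l / 2) with hA
  set B := Finset.univ.filter (fun k : Fin l => l / 2 < (k : ℕ)) with hB
  have hab : a ≠ b := by simp [ha, hb, Fin.ext_iff]; omega
  have hnegval : ∀ k : Fin l, 0 < (k : ℕ) → ((-k : Fin l) : ℕ) = l - (k : ℕ) := by
    intro k hk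
    rw [Fin.coe_neg]
    exact Nat.mod_eq_of_lt (by have := k.isLt; omega)
  have hBA : ∑ k ∈ B, f k = ∑ k ∈ A, f k := by
    refine Finset.sum_nbij' (fun k => -k) (fun k => -k) ?_ ?_ ?_ ?_ ?_
    · intro k hk
      simp only [hB, Finset.mem_filter, Finset.mem_univ, true_and] at hk
      have hkl := k.isLt
      simp only [hA, Finset.mem_filter, Finset.mem_univ, true_and]
      rw [hnegval k (by omega)]
      omega
    · intro k hk
      simp only [hA, Finset.mem_filter, Finset.mem_univ, true_and] at hk
      have hkl := k.isLt
      simp only [hB, Finset.mem_filter, Finset.mem_univ, true_and]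
      rw [hnegval k (by omega)]
      omega
    · intro k _; simp
    · intro k _; simp
    · intro k _; exact (hneg k).symm
  have hd1 : Disjoint ({a, b} : Finset (Fin l)) A := by
    simp only [Finset.disjoint_left, Finset.mem_insert, Finset.mem_singleton, ha, hb,
      Fin.ext_iff, hA, Finset.mem_filter, Finset.mem_univ, true_and]
    intro k hk hkA
    omega
  have hd2 : Disjoint (({a, b} : Finset (Fin l)) ∪ A) B := by
    simp only [Finset.disjoint_left, Finset.mem_union, Finset.mem_insert, Finset.mem_singleton,
      ha, hb, Fin.ext_iff, hA, hB, Finset.mem_filter, Finset.mem_univ, true_and]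
    intro k hk hkB
    omega
  have hU : (Finset.univ : Finset (Fin l)) = ({a, b} ∪ A) ∪ B := by
    ext k
    have := k.isLt
    simp only [Finset.mem_univ, Finset.mem_union, Finset.mem_insert, Finset.mem_singleton,
      hA, hB, Finset.mem_filter, true_and, ha, hb, Fin.ext_iff, true_iff]
    omega
  rw [hU, Finset.sum_union hd2, Finset.sum_union hd1, Finset.sum_pair hab, hBA]
  ring
end
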